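/- arXiv:2602.08264 — 7 statements merged into one kernel-verified Lean document; each statement's English description precedes it below -/
import Mathlib

section
/- Let p be a prime and M ≥ 1 an integer. For any linear order on the pair set P = {(i,j) : 1 ≤ j ≤ i ≤ M} that refines the partial order given by (i₁,j₁) ≼ (i₂,j₂) iff i₁ ≥ i₂ and j₁ ≤ j₂, the result of running the Serganova algorithm on any (λ,θ) ∈ A using that order equals S₁(λ,θ); in particular S₁(λ,θ) = S₂(λ,θ) for all (λ,θ) ∈ A. -/
open Function

/-- The state of the Serganova algorithm: a pair `(λ, θ) ∈ ℤ^M × ℤ^{M+1}`.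
Indices are 0-based, so the paper's `λ_i` (for `1 ≤ i ≤ M`) is `s.1 ⟨i-1,_⟩`
and the paper's `θ_j` (for `1 ≤ j ≤ M+1`) is `s.2 ⟨j-1,_⟩`. -/
abbrev SState (M : ℕ) := (Fin M → ℤ) × (Fin (M + 1) → ℤ)

/-- One step of the Serganova algorithm, processing the (0-based) pair `(i, j)`:
if `λ_i + θ_j ≡ 0 (mod p)` nothing changes, otherwise `λ_i` is decreased by `1`
and `θ_j` is increased by `1`. -/
def sStep (p M : ℕ) (ij : Fin M × Fin (M + 1)) (s : SState M) : SState M :=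
  if (p : ℤ) ∣ s.1 ij.1 + s.2 ij.2 then s
  else (Function.update s.1 ij.1 (s.1 ij.1 - 1),
        Function.update s.2 ij.2 (s.2 ij.2 + 1))

/-- One step of the inverse algorithm, processing the (0-based) pair `(i, j)`:
if `λ_i + θ_j ≡ 0 (mod p)` nothing changes, otherwise `λ_i` is increased by `1`
and `θ_j` is decreased by `1`. -/
def tStep (p M : ℕ) (ij : Fin M × Fin (M + 1)) (s : SState M) : SState M :=
  if (p : ℤ) ∣ s.1 ij.1 + s.2 ij.2 then s
  else (Function.update s.1 ij.1 (s.1 ij.1 + 1),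
        Function.update s.2 ij.2 (s.2 ij.2 - 1))

/-- Run the Serganova algorithm along a list of pairs. -/
def sRun (p M : ℕ) (l : List (Fin M × Fin (M + 1))) (s : SState M) : SState M :=
  l.foldl (fun s ij => sStep p M ij s) s

/-- Run the inverse algorithm along a list of pairs. -/
def tRun (p M : ℕ) (l : List (Fin M × Fin (M + 1))) (s : SState M) : SState M :=
  l.foldl (fun s ij => tStep p M ij s) s

/-- The Version 1 order on the pair set `P = {(i,j) : 0 ≤ j ≤ i ≤ M-1}` (0-based):
`j` increasing, and for fixed `j`, `i` decreasing from `M-1` down to `j`.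
This is the paper's order `(M,1),(M-1,1),…,(1,1),(M,2),…,(2,2),…,(M,M)`. -/
def order1 (M : ℕ) : List (Fin M × Fin (M + 1)) :=
  (List.finRange M).flatMap fun j =>
    ((List.finRange M).reverse.filter fun i => j ≤ i).map fun i => (i, j.castSucc)

/-- The Version 2 order on the pair set `P` (0-based):
`i` decreasing from `M-1` down to `0`, and for fixed `i`, `j` increasing from `0` to `i`.
This is the paper's order `(M,1),(M,2),…,(M,M),(M-1,1),…,(M-1,M-1),…,(1,1)`. -/
def order2 (M : ℕ) : List (Fin M × Fin (M + 1)) :=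
  (List.finRange M).reverse.flatMap fun i =>
    ((List.finRange M).filter fun j => j ≤ i).map fun j => (i, j.castSucc)

/-- The Serganova map `S₁` (Version 1 order). -/
def S1 (p M : ℕ) (s : SState M) : SState M := sRun p M (order1 M) s

/-- The Serganova map `S₂` (Version 2 order). -/
def S2 (p M : ℕ) (s : SState M) : SState M := sRun p M (order2 M) s

/-- The inverse algorithm `T₁`: inverse steps, pairs processed in reverse Version 1 order. -/
def T1 (p M : ℕ) (s : SState M) : SState M := tRun p M (order1 M).reverse s

/-- The inverse algorithm `T₂`: inverse steps, pairs processed in reverse Version 2 order. -/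
def T2 (p M : ℕ) (s : SState M) : SState M := tRun p M (order2 M).reverse s

/-- The set `A` of dominant pairs: `λ_1 ≥ … ≥ λ_M` and `θ_1 ≥ … ≥ θ_{M+1}`. -/
def domA (M : ℕ) : Set (SState M) := {s | Antitone s.1 ∧ Antitone s.2}

/-- The set `𝕄`: dominant pairs such that (in 1-based terms) for `2 ≤ i ≤ M`,
`λ_{i-1} = λ_i → p ∣ λ_i + θ_i`, and for `1 ≤ i ≤ M`, `θ_i = θ_{i+1} → p ∣ λ_i + θ_i`. -/
def setM (p M : ℕ) : Set (SState M) :=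
  {s | Antitone s.1 ∧ Antitone s.2 ∧
    (∀ (i : ℕ) (hi : i + 1 < M),
      s.1 ⟨i, by omega⟩ = s.1 ⟨i + 1, hi⟩ →
        (p : ℤ) ∣ s.1 ⟨i + 1, hi⟩ + s.2 ⟨i + 1, by omega⟩) ∧
    (∀ (i : ℕ) (hi : i < M),
      s.2 ⟨i, by omega⟩ = s.2 ⟨i + 1, by omega⟩ →
        (p : ℤ) ∣ s.1 ⟨i, hi⟩ + s.2 ⟨i, by omega⟩)}

section Aux

variable {α β : Type*}

/-- Two steps commute (as state transformers). -/
def CommW (step : α → β → β) (a b : α) : Prop := ∀ s, step a (step b s) = step b (step a s)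

lemma foldl_comm_head (step : α → β → β) (a : α) :
    ∀ (u : List α), (∀ b ∈ u, CommW step a b) → ∀ s : β,
      u.foldl (fun s x => step x s) (step a s) = step a (u.foldl (fun s x => step x s) s) := by
  intro u
  induction u with
  | nil => intro _ s; rfl
  | cons b t ih =>
      intro h s
      simp only [List.foldl_cons]
      rw [← h b (by simp) s, ih (fun c hc => h c (by simp [hc]))]

/-- Folding along two linear extensions of a partial order gives the same result,
provided steps at incomparable elements commute. -/
lemma foldl_perm_of_pairwise (step : α → β → β) (R : α → α → Prop)
    (hcomm : ∀ a b, ¬ R a b → ¬ R b a → CommW step a b) :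
    ∀ (l₂ l₁ : List α), l₁.Perm l₂ →
      l₁.Pairwise (fun x y => ¬ R y x) → l₂.Pairwise (fun x y => ¬ R y x) →
      ∀ s : β, l₁.foldl (fun s x => step x s) s = l₂.foldl (fun s x => step x s) s := by
  intro l₂
  induction l₂ with
  | nil =>
      intro l₁ hperm _ _ s
      rw [hperm.eq_nil]
  | cons a t ih =>
      intro l₁ hperm hp1 hp2 s
      have ha : a ∈ l₁ := hperm.mem_iff.mpr (by simp)
      obtain ⟨u, v, rfl⟩ := List.append_of_mem ha
      rw [List.pairwise_append] at hp1
      obtain ⟨hu, hav, hcross⟩ := hp1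
      rw [List.pairwise_cons] at hav hp2
      have hcommu : ∀ b ∈ u, CommW step a b := by
        intro b hb
        have h1 : ¬ R a b := hcross b hb a (by simp)
        by_cases hba : b = a
        · subst hba; intro s; rfl
        · have hbt : b ∈ t := by
            have : b ∈ a :: t := hperm.mem_iff.mp (by simp [hb])
            simpa [hba] using this
          exact hcomm a b h1 (hp2.1 b hbt)
      have hperm' : (u ++ v).Perm t := by
        have h1 : (a :: (u ++ v)).Perm (a :: t) := (List.perm_middle.symm).trans hperm
        exact h1.cons_inv
      have hp1' : (u ++ v).Pairwise (fun x y => ¬ R y x) := by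
        rw [List.pairwise_append]
        exact ⟨hu, hav.2, fun x hx y hy => hcross x hx y (by simp [hy])⟩
      calc (u ++ a :: v).foldl (fun s x => step x s) s
          = v.foldl (fun s x => step x s) (step a (u.foldl (fun s x => step x s) s)) := by
            simp [List.foldl_append]
        _ = v.foldl (fun s x => step x s) (u.foldl (fun s x => step x s) (step a s)) := by
            rw [foldl_comm_head step a u hcommu]
        _ = (u ++ v).foldl (fun s x => step x s) (step a s) := by simp [List.foldl_append]
        _ = t.foldl (fun s x => step x s) (step a s) := ih (u ++ v) hperm' hp1' hp2.2 (step a s)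
        _ = (a :: t).foldl (fun s x => step x s) s := rfl

end Aux

lemma sStep_comm (p M : ℕ) (a b : Fin M × Fin (M+1)) (h1 : a.1 ≠ b.1) (h2 : a.2 ≠ b.2)
    (s : SState M) : sStep p M a (sStep p M b s) = sStep p M b (sStep p M a s) := by
  unfold sStep
  by_cases hb : (p : ℤ) ∣ s.1 b.1 + s.2 b.2 <;>
  by_cases ha : (p : ℤ) ∣ s.1 a.1 + s.2 a.2 <;>
  simp only [hb, ha, if_true, if_false, Function.update_of_ne h1, Function.update_of_ne h2,
    Function.update_of_ne h1.symm, Function.update_of_ne h2.symm, ha, hb, if_true, if_false] <;>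
  first
  | rfl
  | exact Prod.ext (Function.update_comm h1.symm _ _ _) (Function.update_comm h2.symm _ _ _)

/-- The strict partial order on pairs: `R a b` iff `a` must be processed before `b`. -/
def pairR (M : ℕ) (a b : Fin M × Fin (M + 1)) : Prop := b.1 ≤ a.1 ∧ a.2 ≤ b.2 ∧ a ≠ b

lemma hcomm_sStep (p M : ℕ) (a b : Fin M × Fin (M + 1))
    (ha : ¬ pairR M a b) (hb : ¬ pairR M b a) : CommW (fun ij s => sStep p M ij s) a b := by
  by_cases hab : a = b
  · subst hab; intro s; rfl
  · have h1 : ¬(b.1 ≤ a.1 ∧ a.2 ≤ b.2) := fun ⟨x, y⟩ => ha ⟨x, y, hab⟩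
    have h2 : ¬(a.1 ≤ b.1 ∧ b.2 ≤ a.2) := fun ⟨x, y⟩ => hb ⟨x, y, Ne.symm hab⟩
    simp only [not_and_or, Fin.not_le, Fin.lt_def, Fin.le_def] at h1 h2
    intro s
    refine sStep_comm p M a b (fun h => ?_) (fun h => ?_) s <;>
      rw [Fin.ext_iff] at h <;> omega

lemma mem_order1 (M : ℕ) (x : Fin M × Fin (M + 1)) :
    x ∈ order1 M ↔ x.2.val ≤ x.1.val := by
  unfold order1
  simp only [List.mem_flatMap, List.mem_map, List.mem_filter, List.mem_reverse,
    List.mem_finRange, true_and, decide_eq_true_eq]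
  constructor
  · rintro ⟨j, i, hji, rfl⟩
    simpa using hji
  · intro h
    refine ⟨⟨x.2.val, by omega⟩, x.1, by simpa [Fin.le_def] using h, ?_⟩
    ext <;> simp

lemma mem_order2 (M : ℕ) (x : Fin M × Fin (M + 1)) :
    x ∈ order2 M ↔ x.2.val ≤ x.1.val := by
  unfold order2
  simp only [List.mem_flatMap, List.mem_map, List.mem_filter, List.mem_reverse,
    List.mem_finRange, true_and, decide_eq_true_eq]
  constructor
  · rintro ⟨i, j, hji, rfl⟩
    simpa using hji
  · intro h
    refine ⟨x.1, ⟨x.2.val, by omega⟩, by simpa [Fin.le_def] using h, ?_⟩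
    ext <;> simp

lemma pairwise_order1 (M : ℕ) :
    (order1 M).Pairwise
      (fun x y => x.2.val < y.2.val ∨ (x.2.val = y.2.val ∧ y.1.val < x.1.val)) := by
  unfold order1
  rw [List.pairwise_flatMap]
  constructor
  · intro j _
    rw [List.pairwise_map]
    have h0 : ((List.finRange M).reverse).Pairwise (fun a b : Fin M => b < a) :=
      (List.pairwise_reverse).mpr (List.pairwise_lt_finRange M)
    have h1 : (((List.finRange M).reverse.filter fun i => j ≤ i)).Pairwise
        (fun a b : Fin M => b < a) := h0.sublist List.filter_sublist
    exact h1.imp (fun {a b} h => Or.inr ⟨rfl, h⟩)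
  · refine ((List.pairwise_lt_finRange M)).imp ?_
    intro j₁ j₂ h x hx y hy
    simp only [List.mem_map] at hx hy
    obtain ⟨i₁, _, rfl⟩ := hx
    obtain ⟨i₂, _, rfl⟩ := hy
    left
    simpa using h

lemma pairwise_order2 (M : ℕ) :
    (order2 M).Pairwise
      (fun x y => y.1.val < x.1.val ∨ (x.1.val = y.1.val ∧ x.2.val < y.2.val)) := by
  unfold order2
  rw [List.pairwise_flatMap]
  constructor
  · intro i _
    rw [List.pairwise_map]
    have h1 : (((List.finRange M).filter fun j => j ≤ i)).Pairwise
        (fun a b : Fin M => a < b) :=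
      (List.pairwise_lt_finRange M).sublist List.filter_sublist
    exact h1.imp (fun {a b} h => Or.inr ⟨rfl, h⟩)
  · refine ((List.pairwise_reverse).mpr (List.pairwise_lt_finRange M)).imp ?_
    intro i₁ i₂ h x hx y hy
    simp only [List.mem_map] at hx hy
    obtain ⟨j₁, _, rfl⟩ := hx
    obtain ⟨j₂, _, rfl⟩ := hy
    left
    exact h

lemma pairwiseQ_order1 (M : ℕ) :
    (order1 M).Pairwise (fun x y => ¬ pairR M y x) := by
  refine (pairwise_order1 M).imp ?_
  rintro a b h ⟨h1, h2, _⟩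
  rw [Fin.le_def] at h1 h2
  omega

lemma pairwiseQ_order2 (M : ℕ) :
    (order2 M).Pairwise (fun x y => ¬ pairR M y x) := by
  refine (pairwise_order2 M).imp ?_
  rintro a b h ⟨h1, h2, _⟩
  rw [Fin.le_def] at h1 h2
  omega

lemma nodup_order1 (M : ℕ) : (order1 M).Nodup := by
  refine (pairwise_order1 M).imp ?_
  intro a b h hab
  subst hab
  omega

lemma perm_order2_order1 (M : ℕ) : (order2 M).Perm (order1 M) := by
  have n2 : (order2 M).Nodup := by
    refine (pairwise_order2 M).imp ?_
    intro a b h hab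
    subst hab
    omega
  rw [List.perm_ext_iff_of_nodup n2 (nodup_order1 M)]
  intro x
  rw [mem_order1, mem_order2]

lemma indexOf_getElem' {α} [BEq α] [LawfulBEq α] {l : List α} (H : l.Nodup) (i : ℕ)
    (h : i < l.length) : l.idxOf l[i] = i := by
  induction l generalizing i with
  | nil => simp at h
  | cons b t ih =>
    cases i with
    | zero => simp [List.idxOf, List.findIdx_cons]
    | succ n =>
      have hn : n < t.length := by simpa using h
      have hne : b ≠ t[n] := by
        intro he
        exact (List.nodup_cons.mp H).1 (he ▸ List.getElem_mem hn)
      have hb : (b == t[n]) = false := by simpa using hne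
      simp only [List.getElem_cons_succ, List.idxOf, List.findIdx_cons, hb, cond_false]
      rw [← List.idxOf]
      rw [ih (List.nodup_cons.mp H).2 n hn]

/-- Running the Serganova algorithm along any linear order on `P`
refining the partial order `(i₁,j₁) ≼ (i₂,j₂) ↔ i₁ ≥ i₂ ∧ j₁ ≤ j₂` gives the same
result as `S₁` on dominant pairs; in particular `S₁ = S₂` on `A`. -/
theorem serganova_order_independence (p M : ℕ) (hp : p.Prime) (hM : 1 ≤ M) :
    (∀ l : List (Fin M × Fin (M + 1)), l.Perm (order1 M) →
      (∀ a b : Fin M × Fin (M + 1), a ∈ l → b ∈ l →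
        b.1 ≤ a.1 → a.2 ≤ b.2 → a ≠ b → l.idxOf a < l.idxOf b) →
      ∀ s ∈ domA M, sRun p M l s = S1 p M s) ∧
    (∀ s ∈ domA M, S1 p M s = S2 p M s) := by
  constructor
  · intro l hperm hidx s _
    have hnd : l.Nodup := (nodup_order1 M).perm hperm.symm
    have hpl : l.Pairwise (fun x y => ¬ pairR M y x) := by
      rw [List.pairwise_iff_getElem]
      intro i j hi hj hij
      rintro ⟨h1, h2, h3⟩
      have := hidx l[j] l[i] (l.getElem_mem hj) (l.getElem_mem hi) h1 h2 h3
      rw [indexOf_getElem' hnd j hj, indexOf_getElem' hnd i hi] at this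
      omega
    exact foldl_perm_of_pairwise _ (pairR M) (hcomm_sStep p M) (order1 M) l hperm hpl
      (pairwiseQ_order1 M) s
  · intro s _
    exact (foldl_perm_of_pairwise _ (pairR M) (hcomm_sStep p M) (order1 M) (order2 M)
      (perm_order2_order1 M) (pairwiseQ_order2 M) (pairwiseQ_order1 M) s).symm
end

section
/- Let p be a prime and M ≥ 1 an integer. Then S₁(A) ⊆ 𝕄: for every dominant pair (λ,θ) ∈ A, the output (λ̃,θ̃) = S₁(λ,θ) satisfies λ̃_1 ≥ … ≥ λ̃_M, θ̃_1 ≥ … ≥ θ̃_{M+1}, and the congruence conditions: λ̃_{i−1} = λ̃_i implies λ̃_i + θ̃_i ≡ 0 (mod p), and θ̃_i = θ̃_{i+1} implies λ̃_i + θ̃_i ≡ 0 (mod p). -/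
open Function

namespace Serg


abbrev NS := (ℕ → ℤ) × (ℕ → ℤ)

def nstep (p i k : ℕ) (s : NS) : NS :=
  if (p : ℤ) ∣ s.1 i + s.2 k then s
  else (Function.update s.1 i (s.1 i - 1), Function.update s.2 k (s.2 k + 1))

def ncol (p k lo : ℕ) : ℕ → NS → NS
  | 0, s => s
  | n+1, s => ncol p k lo n (nstep p (lo+n) k s)

def nrun (p : ℕ) : ℕ → ℕ → NS → NS
  | _, 0, s => s
  | c, m+1, s => nrun p (c+1) m (ncol p c c (m+1) s)

variable {p i k k' lo n : ℕ} {s : NS}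

lemma nstep_pos (h : (p : ℤ) ∣ s.1 i + s.2 k) : nstep p i k s = s := if_pos h

lemma nstep_neg_fst (h : ¬ (p : ℤ) ∣ s.1 i + s.2 k) : (nstep p i k s).1 i = s.1 i - 1 := by
  simp [nstep, if_neg h]

lemma nstep_neg_snd (h : ¬ (p : ℤ) ∣ s.1 i + s.2 k) : (nstep p i k s).2 k = s.2 k + 1 := by
  simp [nstep, if_neg h]

lemma nstep_fst_of_ne {a : ℕ} (h : a ≠ i) : (nstep p i k s).1 a = s.1 a := by
  unfold nstep; split
  · rfl
  · simp [Function.update_apply, h]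

lemma nstep_snd_of_ne {a : ℕ} (h : a ≠ k) : (nstep p i k s).2 a = s.2 a := by
  unfold nstep; split
  · rfl
  · simp [Function.update_apply, h]

lemma nstep_fst_le (a : ℕ) : (nstep p i k s).1 a ≤ s.1 a := by
  unfold nstep; split
  · exact le_refl _
  · by_cases h : a = i
    · subst h; simp
    · simp [Function.update_apply, h]

lemma nstep_snd_ge (a : ℕ) : s.2 a ≤ (nstep p i k s).2 a := by
  unfold nstep; split
  · exact le_refl _
  · by_cases h : a = k
    · subst h; simp
    · simp [Function.update_apply, h]

lemma nstep_snd_le_add : (nstep p i k s).2 k ≤ s.2 k + 1 := by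
  unfold nstep; split
  · omega
  · simp

lemma ncol_fst_eq {a : ℕ} (h : a < lo ∨ lo + n ≤ a) : (ncol p k lo n s).1 a = s.1 a := by
  induction n generalizing s with
  | zero => rfl
  | succ n ih =>
    rw [ncol, ih (by omega), nstep_fst_of_ne (by omega)]

lemma ncol_snd_eq {a : ℕ} (h : a ≠ k) : (ncol p k lo n s).2 a = s.2 a := by
  induction n generalizing s with
  | zero => rfl
  | succ n ih => rw [ncol, ih, nstep_snd_of_ne h]

lemma ncol_fst_le (a : ℕ) : (ncol p k lo n s).1 a ≤ s.1 a := by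
  induction n generalizing s with
  | zero => exact le_refl _
  | succ n ih =>
    rw [ncol]
    exact le_trans (ih (s := nstep p (lo+n) k s)) (nstep_fst_le a)

lemma ncol_snd_ge : s.2 k ≤ (ncol p k lo n s).2 k := by
  induction n generalizing s with
  | zero => exact le_refl _
  | succ n ih =>
    rw [ncol]
    exact le_trans (nstep_snd_ge k) (ih (s := nstep p (lo+n) k s))

lemma ncol_succ' : ∀ n (s : NS), ncol p k lo (n+1) s = nstep p lo k (ncol p k (lo+1) n s) := by
  intro n
  induction n with
  | zero => intro s; rw [ncol]; simp [ncol]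
  | succ n ih =>
    intro s
    rw [ncol, ih]
    have : lo + (n+1) = (lo+1) + n := by omega
    rw [this, ncol]

/-- Main single-column lemma: antitone preservation plus the "top guard". -/
lemma colMain : ∀ (n : ℕ) (s : NS),
    (∀ a b, lo ≤ a → a ≤ b → b ≤ lo + n → s.1 b ≤ s.1 a) →
    (∀ a b, lo ≤ a → a ≤ b → b ≤ lo + n →
      (ncol p k lo (n+1) s).1 b ≤ (ncol p k lo (n+1) s).1 a) ∧
    (∀ b : ℤ, b ≤ s.1 (lo+n) → (s.1 (lo+n) = b → (p : ℤ) ∣ b + s.2 k) →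
      b ≤ (ncol p k lo (n+1) s).1 (lo+n)) := by
  intro n
  induction n with
  | zero =>
    intro s _
    constructor
    · intro a b ha hab hb
      have : a = b := by omega
      subst this; exact le_refl _
    · intro b hb hcond
      have e : ncol p k lo 1 s = nstep p (lo+0) k s := by rw [ncol]; rfl
      rw [e]
      by_cases hd : (p : ℤ) ∣ s.1 (lo+0) + s.2 k
      · rw [nstep_pos hd]; simpa using hb
      · rcases lt_or_eq_of_le hb with h | h
        · have := nstep_neg_fst (i := lo + 0) hd
          simp only [Nat.add_zero] at *
          omega
        · exact absurd (by rw [← h]; exact hcond h.symm) hd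
  | succ n ih =>
    intro s hs
    set s₁ := nstep p (lo+(n+1)) k s with hs₁
    have e : ncol p k lo (n+2) s = ncol p k lo (n+1) s₁ := by rw [ncol]
    have hfix : ∀ x, x ≤ lo + n → s₁.1 x = s.1 x := by
      intro x hx; exact nstep_fst_of_ne (by omega)
    have hs₁anti : ∀ a b, lo ≤ a → a ≤ b → b ≤ lo + n → s₁.1 b ≤ s₁.1 a := by
      intro a b ha hab hb
      rw [hfix a (by omega), hfix b hb]
      exact hs a b ha hab (by omega)
    obtain ⟨ihA, ihG⟩ := ih s₁ hs₁anti
    have htop : (ncol p k lo (n+1) s₁).1 (lo+(n+1)) = s₁.1 (lo+(n+1)) :=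
      ncol_fst_eq (by omega)
    have hle1 : s₁.1 (lo+(n+1)) ≤ s.1 (lo+(n+1)) := nstep_fst_le _
    have key : s₁.1 (lo+(n+1)) ≤ (ncol p k lo (n+1) s₁).1 (lo+n) := by
      apply ihG
      · rw [hfix (lo+n) (le_refl _)]
        exact le_trans hle1 (hs (lo+n) (lo+(n+1)) (by omega) (by omega) (by omega))
      · intro heq
        rw [hfix (lo+n) (le_refl _)] at heq
        have hle2 : s.1 (lo+(n+1)) ≤ s.1 (lo+n) :=
          hs (lo+n) (lo+(n+1)) (by omega) (by omega) (by omega)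
        by_cases hd : (p : ℤ) ∣ s.1 (lo+(n+1)) + s.2 k
        · have hes : s₁ = s := nstep_pos hd
          rw [hes] at heq ⊢
          exact hd
        · exfalso
          have h1 := nstep_neg_fst (i := lo+(n+1)) (s := s) hd
          rw [← hs₁] at h1
          omega
    constructor
    · intro a b ha hab hb
      rw [e]
      by_cases hbtop : b ≤ lo + n
      · exact ihA a b ha hab hbtop
      · have hb' : b = lo + (n+1) := by omega
        subst hb'
        rw [htop]
        by_cases hatop : a ≤ lo + n
        · exact le_trans key (ihA a (lo+n) ha hatop (le_refl _))
        · have : a = lo + (n+1) := by omega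
          subst this; rw [htop]
    · intro b hb hcond
      rw [e, htop]
      by_cases hd : (p : ℤ) ∣ s.1 (lo+(n+1)) + s.2 k
      · have hes : s₁ = s := nstep_pos hd
        rw [hes]; exact hb
      · have h1 := nstep_neg_fst (i := lo+(n+1)) (s := s) hd
        rcases lt_or_eq_of_le hb with h | h
        · rw [← hs₁] at h1; omega
        · exact absurd (by rw [← h]; exact hcond h.symm) hd

/-- Coupling between two consecutive columns. -/
lemma coup : ∀ (n : ℕ) (s s' : NS),
    (∀ a, lo ≤ a → a < lo + n → s'.1 a = (ncol p k lo n s).1 a) →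
    s'.2 k' ≤ s.2 k →
    (ncol p k' lo n s').2 k' ≤ (ncol p k lo n s).2 k := by
  intro n
  induction n with
  | zero => intro s s' _ h; exact h
  | succ n ih =>
    intro s s' hagr hu
    set sa := nstep p (lo+n) k s with hsa
    set sb := nstep p (lo+n) k' s' with hsb
    have e1 : ncol p k lo (n+1) s = ncol p k lo n sa := by rw [ncol]
    have e2 : ncol p k' lo (n+1) s' = ncol p k' lo n sb := by rw [ncol]
    rw [e1, e2]
    have hval : s'.1 (lo+n) = sa.1 (lo+n) := by
      rw [hagr (lo+n) (by omega) (by omega), e1, ncol_fst_eq (by omega)]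
    apply ih
    · intro a ha han
      have : sb.1 a = s'.1 a := nstep_fst_of_ne (by omega)
      rw [this, hagr a ha (by omega), e1]
    · by_cases hd : (p : ℤ) ∣ s.1 (lo+n) + s.2 k
      · have hsaeq : sa = s := nstep_pos hd
        rcases lt_or_eq_of_le hu with h | h
        · have := nstep_snd_le_add (p := p) (i := lo+n) (k := k') (s := s')
          rw [← hsb] at this
          rw [hsaeq]; omega
        · have hdiv' : (p : ℤ) ∣ s'.1 (lo+n) + s'.2 k' := by
            rw [hval, hsaeq, h]; exact hd
          rw [hsb, nstep_pos hdiv', hsaeq, h]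
      · have := nstep_neg_snd (s := s) (i := lo+n) hd
        rw [← hsa] at this
        have h2 := nstep_snd_le_add (p := p) (i := lo+n) (k := k') (s := s')
        rw [← hsb] at h2
        omega

lemma nrun_fst_frame {a : ℕ} : ∀ (m c : ℕ) (s : NS), (a < c ∨ c + m ≤ a) →
    (nrun p c m s).1 a = s.1 a := by
  intro m
  induction m with
  | zero => intro c s _; rfl
  | succ m ih =>
    intro c s h
    rw [nrun, ih (c+1) _ (by omega), ncol_fst_eq (by omega)]

lemma nrun_snd_frame {a : ℕ} : ∀ (m c : ℕ) (s : NS), (a < c ∨ c + m ≤ a) →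
    (nrun p c m s).2 a = s.2 a := by
  intro m
  induction m with
  | zero => intro c s _; rfl
  | succ m ih =>
    intro c s h
    rw [nrun, ih (c+1) _ (by omega), ncol_snd_eq (by omega)]

lemma nrun_fst_le {a : ℕ} : ∀ (m c : ℕ) (s : NS), (nrun p c m s).1 a ≤ s.1 a := by
  intro m
  induction m with
  | zero => intro c s; exact le_refl _
  | succ m ih =>
    intro c s
    rw [nrun]
    exact le_trans (ih (c+1) _) (ncol_fst_le a)

/-- Main induction: the full run starting from column `c` with `m` columns. -/
lemma mainInd : ∀ (m c : ℕ) (s : NS),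
    (∀ a b, c ≤ a → a ≤ b → b < c + m → s.1 b ≤ s.1 a) →
    (∀ a b, c ≤ a → a ≤ b → b ≤ c + m → s.2 b ≤ s.2 a) →
    (∀ a b, c ≤ a → a ≤ b → b < c + m →
        (nrun p c m s).1 b ≤ (nrun p c m s).1 a) ∧
    (∀ a b, c ≤ a → a ≤ b → b ≤ c + m →
        (nrun p c m s).2 b ≤ (nrun p c m s).2 a) ∧
    (∀ i, c ≤ i → i + 1 < c + m → (nrun p c m s).1 i = (nrun p c m s).1 (i+1) →
        (p : ℤ) ∣ (nrun p c m s).1 (i+1) + (nrun p c m s).2 (i+1)) ∧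
    (∀ j, c ≤ j → j < c + m → (nrun p c m s).2 j = (nrun p c m s).2 (j+1) →
        (p : ℤ) ∣ (nrun p c m s).1 j + (nrun p c m s).2 j) := by
  intro m
  induction m with
  | zero =>
    intro c s hLam hTh
    exact ⟨hLam, hTh, by omega, by omega⟩
  | succ m ih =>
    intro c s hLam hTh
    set s₁ := ncol p c c (m+1) s with hs₁def
    set R1 := ncol p c (c+1) m s with hR1def
    have hdec : s₁ = nstep p c c R1 := ncol_succ' m s
    have e : nrun p c (m+1) s = nrun p (c+1) m s₁ := by rw [nrun]
    have hcolA : ∀ a b, c ≤ a → a ≤ b → b ≤ c + m → s₁.1 b ≤ s₁.1 a :=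
      (colMain m s (fun a b ha hab hb => hLam a b ha hab (by omega))).1
    have hTh1 : ∀ x, x ≠ c → s₁.2 x = s.2 x := fun x hx => ncol_snd_eq hx
    obtain ⟨IHlam, IHth, IHL, IHT⟩ := ih (c+1) s₁
      (fun a b ha hab hb => hcolA a b (by omega) hab (by omega))
      (fun a b ha hab hb => by
        rw [hTh1 a (by omega), hTh1 b (by omega)]
        exact hTh a b (by omega) hab (by omega))
    set t := nrun p (c+1) m s₁ with htdef
    have f1 : t.1 c = s₁.1 c := nrun_fst_frame m (c+1) s₁ (by omega)
    have f2 : t.2 c = s₁.2 c := nrun_snd_frame m (c+1) s₁ (by omega)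
    -- key bound : t.2 (c+1) ≤ s₁.2 c, refined for m ≥ 1
    have hkey : ∀ m' : ℕ, m = m' + 1 → t.2 (c+1) ≤ R1.2 c := by
      intro m' hm
      subst hm
      have e2 : t = nrun p (c+2) m' (ncol p (c+1) (c+1) (m'+1) s₁) := by
        rw [htdef, nrun]
      have e3 : t.2 (c+1) = (ncol p (c+1) (c+1) (m'+1) s₁).2 (c+1) := by
        rw [e2, nrun_snd_frame m' (c+2) _ (by omega)]
      rw [e3]
      apply coup (k := c) (k' := c+1) (m'+1) s s₁
      · intro a ha han
        rw [hdec, ← hR1def]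
        exact nstep_fst_of_ne (by omega)
      · rw [hTh1 (c+1) (by omega)]
        exact hTh c (c+1) (le_refl _) (by omega) (by omega)
    have hR1s₁ : R1.2 c ≤ s₁.2 c := by
      rw [hdec]; exact nstep_snd_ge c
    have hclaim : t.2 (c+1) ≤ s₁.2 c := by
      cases m with
      | zero =>
        have : t = s₁ := rfl
        rw [this, hTh1 (c+1) (by omega)]
        exact le_trans (hTh c (c+1) (le_refl _) (by omega) (by omega)) ncol_snd_ge
      | succ m' => exact le_trans (hkey m' rfl) hR1s₁
    rw [e]
    refine ⟨?_, ?_, ?_, ?_⟩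
    · -- λ antitone
      intro a b ha hab hb
      rcases eq_or_lt_of_le ha with h | h
      · subst h
        rw [f1]
        exact le_trans (nrun_fst_le m (c+1) s₁) (hcolA c b (le_refl _) hab (by omega))
      · exact IHlam a b (by omega) hab (by omega)
    · -- θ antitone
      intro a b ha hab hb
      rcases eq_or_lt_of_le ha with h | h
      · subst h
        rcases eq_or_lt_of_le hab with h2 | h2
        · subst h2; exact le_refl _
        · rw [f2]
          exact le_trans (IHth (c+1) b (le_refl _) (by omega) (by omega)) hclaim
      · exact IHth a b (by omega) hab (by omega)
    · -- λ condition
      intro i hi hi1 heq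
      rcases eq_or_lt_of_le hi with h | h
      · -- i = c, so m ≥ 1
        subst h
        have hm : 1 ≤ m := by omega
        obtain ⟨m', rfl⟩ : ∃ m', m = m' + 1 := ⟨m - 1, by omega⟩
        set C := ncol p (c+1) (c+1) (m'+1) s₁ with hCdef
        set s₂ := ncol p (c+1) (c+2) m' s₁ with hs₂def
        have hC : C = nstep p (c+1) (c+1) s₂ := ncol_succ' m' s₁
        have e2 : t = nrun p (c+2) m' C := by rw [htdef, nrun]
        have e3 : t.1 (c+1) = C.1 (c+1) := by
          rw [e2, nrun_fst_frame m' (c+2) _ (by omega)]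
        have e4 : t.2 (c+1) = C.2 (c+1) := by
          rw [e2, nrun_snd_frame m' (c+2) _ (by omega)]
        have e5 : s₂.1 (c+1) = s₁.1 (c+1) := ncol_fst_eq (by omega)
        by_cases hd : (p : ℤ) ∣ s₂.1 (c+1) + s₂.2 (c+1)
        · rw [e3, e4, hC, nstep_pos hd]
          exact hd
        · exfalso
          have h1 : C.1 (c+1) = s₂.1 (c+1) - 1 := by rw [hC]; exact nstep_neg_fst hd
          have h2 : s₁.1 (c+1) ≤ s₁.1 c := hcolA c (c+1) (le_refl _) (by omega) (by omega)
          rw [f1, e3, h1, e5] at heq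
          omega
      · exact IHL i (by omega) (by omega) heq
    · -- θ condition
      intro j hj hjm heq
      rcases eq_or_lt_of_le hj with h | h
      · subst h
        cases m with
        | zero =>
          have ht : t = s₁ := rfl
          have e1 : s₁ = nstep p c c s := by
            rw [hs₁def]; have := ncol_succ' (p := p) (k := c) (lo := c) 0 s
            rw [this]; rfl
          by_cases hd : (p : ℤ) ∣ s.1 c + s.2 c
          · have : s₁ = s := by rw [e1, nstep_pos hd]
            rw [ht, this]; exact hd
          · exfalso
            have h1 : s₁.2 c = s.2 c + 1 := by rw [e1]; exact nstep_neg_snd hd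
            have h2 : s₁.2 (c+1) = s.2 (c+1) := hTh1 (c+1) (by omega)
            have h3 : s.2 (c+1) ≤ s.2 c := hTh c (c+1) (le_refl _) (by omega) (by omega)
            rw [ht, h2] at heq
            omega
        | succ m' =>
          have hk := hkey m' rfl
          by_cases hd : (p : ℤ) ∣ R1.1 c + R1.2 c
          · have hs₁R : s₁ = R1 := by rw [hdec, nstep_pos hd]
            rw [f1, f2, hs₁R]
            exact hd
          · exfalso
            have h1 : s₁.2 c = R1.2 c + 1 := by rw [hdec]; exact nstep_neg_snd hd
            rw [f2] at heq
            omega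
      · exact IHT j (by omega) (by omega) heq


def nfold (p : ℕ) (l : List (ℕ × ℕ)) (s : NS) : NS :=
  l.foldl (fun s ij => nstep p ij.1 ij.2 s) s

lemma nfold_append (l₁ l₂ : List (ℕ × ℕ)) (s : NS) :
    nfold p (l₁ ++ l₂) s = nfold p l₂ (nfold p l₁ s) := List.foldl_append

lemma nfold_cons (ij : ℕ × ℕ) (l : List (ℕ × ℕ)) (s : NS) :
    nfold p (ij :: l) s = nfold p l (nstep p ij.1 ij.2 s) := rfl

lemma ncol_eq_nfold : ∀ (n lo k : ℕ) (s : NS),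
    nfold p (((List.range' lo n).reverse).map (fun i => (i, k))) s = ncol p k lo n s := by
  intro n
  induction n with
  | zero => intro lo k s; rfl
  | succ n ih =>
    intro lo k s
    rw [List.range'_1_concat, List.reverse_append]
    simp only [List.reverse_singleton, List.singleton_append, List.map_cons]
    rw [nfold_cons, ih, ncol]

lemma nrun_eq_nfold (M : ℕ) : ∀ (m c : ℕ) (s : NS), c + m = M →
    nfold p ((List.range' c m).flatMap
      (fun j => ((List.range' j (M - j)).reverse).map (fun i => (i, j)))) s
      = nrun p c m s := by
  intro m
  induction m with
  | zero => intro c s _; rfl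
  | succ m ih =>
    intro c s h
    rw [List.range'_succ, List.flatMap_cons, nfold_append, ncol_eq_nfold]
    have hMc : M - c = m + 1 := by omega
    rw [hMc, nrun]
    exact ih (c+1) _ (by omega)

lemma filter_range (M v : ℕ) :
    (List.range M).filter (fun x => decide (v ≤ x)) = List.range' v (M - v) := by
  induction M with
  | zero => simp
  | succ M ih =>
    rw [List.range_succ, List.filter_append, ih]
    by_cases h : v ≤ M
    · have h2 : (M+1) - v = (M - v) + 1 := by omega
      rw [h2, List.range'_1_concat]
      have h3 : v + (M - v) = M := by omega
      simp [h, h3]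
    · have h1 : M + 1 - v = 0 := by omega
      have h2 : M - v = 0 := by omega
      rw [h1, h2]
      simp [h]

lemma col_list (M : ℕ) (j : Fin M) :
    (((List.finRange M).reverse.filter (fun i => decide (j ≤ i))).map
        (fun i => ((i : Fin M).val, j.val)))
    = ((List.range' j.val (M - j.val)).reverse).map (fun i => (i, j.val)) := by
  rw [List.filter_reverse, List.map_reverse, List.map_reverse]
  congr 1
  have h0 : (List.filter (fun i => decide (j ≤ i)) (List.finRange M))
      = List.filter ((fun x : ℕ => decide (j.val ≤ x)) ∘ Fin.val) (List.finRange M) := by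
    apply List.filter_congr
    intro x _
    exact decide_eq_decide.mpr Fin.le_def
  have h1 : (fun i : Fin M => (i.val, j.val)) = ((fun v : ℕ => (v, j.val)) ∘ Fin.val) := rfl
  rw [h0, h1, ← List.map_map, ← List.filter_map, List.map_coe_finRange_eq_range, filter_range]

lemma order1_vals (M : ℕ) :
    (order1 M).map (fun ij => (ij.1.val, ij.2.val)) =
    (List.range' 0 M).flatMap
      (fun j => ((List.range' j (M - j)).reverse).map (fun i => (i, j))) := by
  unfold order1
  rw [List.map_flatMap]
  have h1 : List.range' 0 M = (List.finRange M).map Fin.val := by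
    rw [List.map_coe_finRange_eq_range, List.range_eq_range']
  rw [h1, List.flatMap_map]
  apply congrArg ((List.finRange M).flatMap ·)
  funext j
  rw [List.map_map]
  have h2 : ((fun ij : Fin M × Fin (M+1) => (ij.1.val, ij.2.val)) ∘
      (fun i => (i, j.castSucc))) = fun i : Fin M => (i.val, j.val) := rfl
  rw [h2]
  exact col_list M j

def Agree (M : ℕ) (s : SState M) (t : NS) : Prop :=
  (∀ (i : ℕ) (h : i < M), t.1 i = s.1 ⟨i, h⟩) ∧
  (∀ (j : ℕ) (h : j < M+1), t.2 j = s.2 ⟨j, h⟩)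

lemma agree_step {M : ℕ} {s : SState M} {t : NS} (hA : Agree M s t)
    (i : Fin M) (j : Fin (M+1)) :
    Agree M (sStep p M (i, j) s) (nstep p i.val j.val t) := by
  have h1 : t.1 i.val = s.1 i := by simpa using hA.1 i.val i.isLt
  have h2 : t.2 j.val = s.2 j := by simpa using hA.2 j.val j.isLt
  unfold sStep nstep
  simp only [h1, h2]
  by_cases hd : (p : ℤ) ∣ s.1 i + s.2 j
  · rw [if_pos hd, if_pos hd]
    exact hA
  · rw [if_neg hd, if_neg hd]
    constructor
    · intro a ha
      by_cases hai : a = i.val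
      · subst hai
        simp [Function.update_apply, h1]
      · simp only [Function.update_apply]
        rw [if_neg hai, if_neg (by simp [Fin.ext_iff, hai]), hA.1 a ha]
    · intro a ha
      by_cases hai : a = j.val
      · subst hai
        simp [Function.update_apply, h2]
      · simp only [Function.update_apply]
        rw [if_neg hai, if_neg (by simp [Fin.ext_iff, hai]), hA.2 a ha]

lemma agree_run {M : ℕ} : ∀ (l : List (Fin M × Fin (M+1))) (s : SState M) (t : NS),
    Agree M s t →
    Agree M (sRun p M l s) (nfold p (l.map (fun ij => (ij.1.val, ij.2.val))) t) := by
  intro l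
  induction l with
  | nil => intro s t h; exact h
  | cons ij l ih =>
    intro s t h
    rw [List.map_cons, nfold_cons]
    have hstep := agree_step (p := p) h ij.1 ij.2
    have e : sRun p M (ij :: l) s = sRun p M l (sStep p M ij s) := rfl
    rw [e]
    have e2 : sStep p M ij s = sStep p M (ij.1, ij.2) s := by rw [Prod.mk.eta]
    rw [e2]
    exact ih _ _ hstep


end Serg

/-- `S₁(A) ⊆ 𝕄`. -/
theorem serganova_image_subset (p M : ℕ) (hp : p.Prime) (hM : 1 ≤ M) :
    ∀ s ∈ domA M, S1 p M s ∈ setM p M := by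
  intro s hs
  classical
  set t0 : Serg.NS := (fun i => if h : i < M then s.1 ⟨i, h⟩ else 0,
                       fun j => if h : j < M+1 then s.2 ⟨j, h⟩ else 0) with ht0
  have hA : Serg.Agree M s t0 := ⟨fun i h => dif_pos h, fun j h => dif_pos h⟩
  have hrun : Serg.Agree M (S1 p M s) (Serg.nrun p 0 M t0) := by
    have h := Serg.agree_run (p := p) (order1 M) s t0 hA
    rwa [Serg.order1_vals, Serg.nrun_eq_nfold M M 0 t0 (by omega)] at h
  have hL0 : ∀ a b, 0 ≤ a → a ≤ b → b < 0 + M → t0.1 b ≤ t0.1 a := by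
    intro a b _ hab hb
    have hb' : b < M := by omega
    have ha' : a < M := by omega
    have e1 : t0.1 b = s.1 ⟨b, hb'⟩ := dif_pos hb'
    have e2 : t0.1 a = s.1 ⟨a, ha'⟩ := dif_pos ha'
    rw [e1, e2]
    exact hs.1 (show (⟨a, ha'⟩ : Fin M) ≤ ⟨b, hb'⟩ from hab)
  have hT0 : ∀ a b, 0 ≤ a → a ≤ b → b ≤ 0 + M → t0.2 b ≤ t0.2 a := by
    intro a b _ hab hb
    have hb' : b < M + 1 := by omega
    have ha' : a < M + 1 := by omega
    have e1 : t0.2 b = s.2 ⟨b, hb'⟩ := dif_pos hb'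
    have e2 : t0.2 a = s.2 ⟨a, ha'⟩ := dif_pos ha'
    rw [e1, e2]
    exact hs.2 (show (⟨a, ha'⟩ : Fin (M+1)) ≤ ⟨b, hb'⟩ from hab)
  obtain ⟨hA1, hA2, hC1, hC2⟩ := Serg.mainInd (p := p) M 0 t0 hL0 hT0
  refine ⟨?_, ?_, ?_, ?_⟩
  · intro a b hab
    have q1 : (Serg.nrun p 0 M t0).1 a.val = (S1 p M s).1 a := by
      simpa using hrun.1 a.val a.isLt
    have q2 : (Serg.nrun p 0 M t0).1 b.val = (S1 p M s).1 b := by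
      simpa using hrun.1 b.val b.isLt
    rw [← q1, ← q2]
    exact hA1 a.val b.val (Nat.zero_le _) hab (by omega)
  · intro a b hab
    have q1 : (Serg.nrun p 0 M t0).2 a.val = (S1 p M s).2 a := by
      simpa using hrun.2 a.val a.isLt
    have q2 : (Serg.nrun p 0 M t0).2 b.val = (S1 p M s).2 b := by
      simpa using hrun.2 b.val b.isLt
    rw [← q1, ← q2]
    exact hA2 a.val b.val (Nat.zero_le _) hab (by omega)
  · intro i hi heq
    have q1 := hrun.1 i (by omega)
    have q2 := hrun.1 (i+1) hi
    have q3 := hrun.2 (i+1) (by omega)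
    have h := hC1 i (Nat.zero_le _) (by omega) (by rw [q1, q2]; exact heq)
    rw [q2, q3] at h
    exact h
  · intro i hi heq
    have q1 := hrun.2 i (by omega)
    have q2 := hrun.2 (i+1) (by omega)
    have q3 := hrun.1 i hi
    have h := hC2 i (Nat.zero_le _) (by omega) (by rw [q1, q2]; exact heq)
    rw [q1, q3] at h
    exact h
end

section
/- Let p be a prime and M ≥ 1 an integer. Then 𝕄 ⊆ S₁(A): every pair (λ̃,θ̃) ∈ 𝕄 can be obtained as S₁(λ,θ) for some dominant pair (λ,θ) ∈ A. -/
section SergAux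

/-- One inverse column: process values left to right with running θ-value `t`. -/
def colT (p : ℕ) : ℤ → List ℤ → ℤ × List ℤ
  | t, [] => (t, [])
  | t, x :: xs =>
    if (p : ℤ) ∣ x + t then
      ((colT p t xs).1, x :: (colT p t xs).2)
    else
      ((colT p (t - 1) xs).1, (x + 1) :: (colT p (t - 1) xs).2)

lemma colT_nil (p : ℕ) (t : ℤ) : colT p t [] = (t, []) := rfl

lemma colT_cons_pos (p : ℕ) {t x : ℤ} (xs : List ℤ) (h : (p : ℤ) ∣ x + t) :
    colT p t (x :: xs) = ((colT p t xs).1, x :: (colT p t xs).2) := by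
  simp [colT, h]

lemma colT_cons_neg (p : ℕ) {t x : ℤ} (xs : List ℤ) (h : ¬ (p : ℤ) ∣ x + t) :
    colT p t (x :: xs) = ((colT p (t - 1) xs).1, (x + 1) :: (colT p (t - 1) xs).2) := by
  simp [colT, h]

lemma colT_fst_le (p : ℕ) : ∀ (xs : List ℤ) (t : ℤ), (colT p t xs).1 ≤ t := by
  intro xs
  induction xs with
  | nil => intro t; simp [colT]
  | cons x xs ih =>
    intro t
    by_cases h : (p : ℤ) ∣ x + t
    · rw [colT_cons_pos p xs h]; exact ih t
    · rw [colT_cons_neg p xs h]; have := ih (t - 1); omega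

lemma colT_couple (p : ℕ) : ∀ (xs : List ℤ) (t₀ t₁ : ℤ), t₀ ≤ t₁ →
    (colT p t₀ xs).1 ≤ (colT p t₁ (colT p t₀ xs).2).1 := by
  intro xs
  induction xs with
  | nil => intro t₀ t₁ h; simpa [colT] using h
  | cons x xs ih =>
    intro t₀ t₁ hle
    by_cases h0 : (p : ℤ) ∣ x + t₀
    · rw [colT_cons_pos p xs h0]
      by_cases h1 : (p : ℤ) ∣ x + t₁
      · rw [colT_cons_pos p _ h1]; exact ih t₀ t₁ hle
      · rw [colT_cons_neg p _ h1]
        have hne : t₀ ≠ t₁ := by rintro rfl; exact h1 h0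
        exact ih t₀ (t₁ - 1) (by omega)
    · rw [colT_cons_neg p xs h0]
      by_cases h1 : (p : ℤ) ∣ (x + 1) + t₁
      · rw [colT_cons_pos p _ h1]; exact ih (t₀ - 1) t₁ (by omega)
      · rw [colT_cons_neg p _ h1]; exact ih (t₀ - 1) (t₁ - 1) (by omega)

lemma colT_chain (p : ℕ) : ∀ (xs : List ℤ) (t : ℤ),
    List.Chain' (· ≥ ·) xs → List.Chain' (· ≥ ·) (colT p t xs).2 := by
  intro xs
  induction xs with
  | nil => intro t _; simp [colT, List.Chain']
  | cons x xs ih =>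
    intro t h
    cases xs with
    | nil =>
      by_cases h0 : (p : ℤ) ∣ x + t
      · rw [colT_cons_pos p _ h0]; simp [colT, List.Chain']
      · rw [colT_cons_neg p _ h0]; simp [colT, List.Chain']
    | cons y ys =>
      have hxy : x ≥ y := (List.isChain_cons_cons.mp h).1
      have hyy : List.Chain' (· ≥ ·) (y :: ys) := (List.isChain_cons_cons.mp h).2
      have hin := ih t hyy
      by_cases h0 : (p : ℤ) ∣ x + t
      · rw [colT_cons_pos p _ h0]
        by_cases h1 : (p : ℤ) ∣ y + t
        · rw [colT_cons_pos p _ h1] at hin ⊢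
          exact List.isChain_cons_cons.mpr ⟨hxy, hin⟩
        · rw [colT_cons_neg p _ h1] at hin ⊢
          have hne : x ≠ y := by rintro rfl; exact h1 h0
          exact List.isChain_cons_cons.mpr ⟨by omega, hin⟩
      · rw [colT_cons_neg p _ h0]
        have hin' := ih (t - 1) hyy
        by_cases h1 : (p : ℤ) ∣ y + (t - 1)
        · rw [colT_cons_pos p _ h1] at hin' ⊢
          exact List.isChain_cons_cons.mpr ⟨by omega, hin'⟩
        · rw [colT_cons_neg p _ h1] at hin' ⊢
          exact List.isChain_cons_cons.mpr ⟨by omega, hin'⟩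

/-- The whole inverse algorithm in the list model. -/
def TT (p : ℕ) : List ℤ → List ℤ → List ℤ × List ℤ
  | [], th => ([], th)
  | x :: xs, [] => (x :: xs, [])
  | x :: xs, t :: ts =>
    ((colT p t (x :: (TT p xs ts).1)).2, (colT p t (x :: (TT p xs ts).1)).1 :: (TT p xs ts).2)

lemma TT_nil (p : ℕ) (th : List ℤ) : TT p [] th = ([], th) := by
  cases th <;> rfl

lemma TT_cons (p : ℕ) (x t : ℤ) (xs ts : List ℤ) :
    TT p (x :: xs) (t :: ts) =
      ((colT p t (x :: (TT p xs ts).1)).2, (colT p t (x :: (TT p xs ts).1)).1 :: (TT p xs ts).2) := rfl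

/-- The 𝕄 conditions in list form. -/
def MC (p : ℕ) : List ℤ → List ℤ → Prop
  | x :: xs, t :: t₂ :: ts =>
      (∀ x₂ ∈ xs.head?, x = x₂ → (p : ℤ) ∣ x₂ + t₂) ∧
      (t = t₂ → (p : ℤ) ∣ x + t) ∧ MC p xs (t₂ :: ts)
  | _, _ => True

lemma MC_cons (p : ℕ) (x t t₂ : ℤ) (xs ts : List ℤ) :
    MC p (x :: xs) (t :: t₂ :: ts) ↔
      (∀ x₂ ∈ xs.head?, x = x₂ → (p : ℤ) ∣ x₂ + t₂) ∧
      (t = t₂ → (p : ℤ) ∣ x + t) ∧ MC p xs (t₂ :: ts) := by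
  simp [MC]

theorem TT_good (p : ℕ) : ∀ (lam th : List ℤ), th.length = lam.length + 1 →
    List.Chain' (· ≥ ·) lam → List.Chain' (· ≥ ·) th → MC p lam th →
    List.Chain' (· ≥ ·) (TT p lam th).1 ∧ List.Chain' (· ≥ ·) (TT p lam th).2 := by
  intro lam
  induction lam with
  | nil =>
    intro th _ _ hth _
    rw [TT_nil]
    exact ⟨List.isChain_nil, hth⟩
  | cons x xs ih =>
    intro th hlen hlam hth hmc
    obtain ⟨t, t₂, ts₂, rfl⟩ : ∃ t t₂ ts₂, th = t :: t₂ :: ts₂ := by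
      match th with
      | [] => simp at hlen
      | [t] => simp at hlen
      | t :: t₂ :: ts₂ => exact ⟨t, t₂, ts₂, rfl⟩
    obtain ⟨hmc1, hmc2, hmc3⟩ := (MC_cons p x t t₂ xs ts₂).mp hmc
    have htt₂ : t ≥ t₂ := (List.isChain_cons_cons.mp hth).1
    have hth' : List.Chain' (· ≥ ·) (t₂ :: ts₂) := (List.isChain_cons_cons.mp hth).2
    cases xs with
    | nil =>
      rw [TT_cons]
      rw [TT_nil]
      constructor
      · exact colT_chain p [x] t (by simp [List.Chain'])
      · -- Chain' ((colT p t [x]).1 :: t₂ :: ts₂)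
        refine List.isChain_cons_cons.mpr ⟨?_, hth'⟩
        by_cases h0 : (p : ℤ) ∣ x + t
        · rw [colT_cons_pos p _ h0]; simpa [colT] using htt₂
        · rw [colT_cons_neg p _ h0]
          have hne : t ≠ t₂ := fun he => h0 (hmc2 he)
          simp only [colT]
          omega
    | cons x₂ xs₂ =>
      have hlen' : (t₂ :: ts₂).length = (x₂ :: xs₂).length + 1 := by
        simpa using hlen
      have hlam' : List.Chain' (· ≥ ·) (x₂ :: xs₂) := (List.isChain_cons_cons.mp hlam).2
      have hxx₂ : x ≥ x₂ := (List.isChain_cons_cons.mp hlam).1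
      obtain ⟨C1, C2⟩ := ih (t₂ :: ts₂) hlen' hlam' hth' hmc3
      have hmcx : x = x₂ → (p : ℤ) ∣ x₂ + t₂ := fun he => hmc1 x₂ (by simp) he
      simp only [TT_cons] at C1 C2 ⊢
      set I := (TT p xs₂ ts₂).1 with hI
      constructor
      · -- Chain' (colT p t (x :: (colT p t₂ (x₂ :: I)).2)).2
        apply colT_chain
        by_cases h2 : (p : ℤ) ∣ x₂ + t₂
        · rw [colT_cons_pos p _ h2] at C1 ⊢
          exact List.isChain_cons_cons.mpr ⟨hxx₂, C1⟩
        · rw [colT_cons_neg p _ h2] at C1 ⊢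
          have hne : x ≠ x₂ := fun he => h2 (hmcx he)
          exact List.isChain_cons_cons.mpr ⟨by omega, C1⟩
      · -- Chain' ((colT p t (x :: (colT p t₂ (x₂::I)).2)).1 :: (colT p t₂ (x₂::I)).1 :: (TT p xs₂ ts₂).2)
        refine List.isChain_cons_cons.mpr ⟨?_, C2⟩
        by_cases h3 : (p : ℤ) ∣ x + t
        · rw [colT_cons_pos p _ h3]
          exact colT_couple p (x₂ :: I) t₂ t htt₂
        · rw [colT_cons_neg p _ h3]
          have hne : t ≠ t₂ := fun he => h3 (hmc2 he)
          exact colT_couple p (x₂ :: I) t₂ (t - 1) (by omega)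

end SergAux




open Function

section SergBridge

lemma sStep_tStep (p M : ℕ) (a : Fin M × Fin (M + 1)) (s : SState M) :
    sStep p M a (tStep p M a s) = s := by
  by_cases h : (p : ℤ) ∣ s.1 a.1 + s.2 a.2
  · simp [tStep, sStep, h]
  · have hc : ¬ (p : ℤ) ∣ (Function.update s.1 a.1 (s.1 a.1 + 1)) a.1 +
        (Function.update s.2 a.2 (s.2 a.2 - 1)) a.2 := by
      rw [Function.update_self, Function.update_self]
      intro hd
      exact h (by have : s.1 a.1 + 1 + (s.2 a.2 - 1) = s.1 a.1 + s.2 a.2 := by ring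
                  rwa [this] at hd)
    simp only [tStep, if_neg h, sStep, hc, if_neg hc, if_false]
    refine Prod.ext ?_ ?_
    · show Function.update (Function.update s.1 a.1 (s.1 a.1 + 1)) a.1
        ((Function.update s.1 a.1 (s.1 a.1 + 1)) a.1 - 1) = s.1
      rw [Function.update_self, Function.update_idem]
      have : s.1 a.1 + 1 - 1 = s.1 a.1 := by ring
      rw [this, Function.update_eq_self]
    · show Function.update (Function.update s.2 a.2 (s.2 a.2 - 1)) a.2
        ((Function.update s.2 a.2 (s.2 a.2 - 1)) a.2 + 1) = s.2
      rw [Function.update_self, Function.update_idem]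
      have : s.2 a.2 - 1 + 1 = s.2 a.2 := by ring
      rw [this, Function.update_eq_self]

lemma sRun_tRun (p M : ℕ) : ∀ (l : List (Fin M × Fin (M + 1))) (s : SState M),
    sRun p M l (tRun p M l.reverse s) = s := by
  intro l
  induction l with
  | nil => intro s; rfl
  | cons a l ih =>
    intro s
    have h1 : tRun p M ((a :: l).reverse) s = tStep p M a (tRun p M l.reverse s) := by
      simp [tRun, List.reverse_cons, List.foldl_append]
    have h2 : ∀ x, sRun p M (a :: l) x = sRun p M l (sStep p M a x) := by
      intro x; simp [sRun]
    rw [h1, h2, sStep_tStep]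
    exact ih s

lemma colBridge (p M : ℕ) (j : Fin (M + 1)) :
    ∀ (L : List (Fin M)) (s : SState M), L.Nodup →
      (tRun p M (L.map fun i => (i, j)) s).2
          = Function.update s.2 j (colT p (s.2 j) (L.map s.1)).1 ∧
      (∀ i, i ∉ L → (tRun p M (L.map fun i => (i, j)) s).1 i = s.1 i) ∧
      L.map (tRun p M (L.map fun i => (i, j)) s).1 = (colT p (s.2 j) (L.map s.1)).2 := by
  intro L
  induction L with
  | nil =>
    intro s _
    refine ⟨?_, fun i _ => rfl, rfl⟩
    simp [tRun, colT, Function.update_eq_self]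
  | cons i L ih =>
    intro s hnd
    have hiL : i ∉ L := (List.nodup_cons.mp hnd).1
    have hndL : L.Nodup := (List.nodup_cons.mp hnd).2
    have hstep : ∀ s', tRun p M ((i :: L).map fun i => (i, j)) s'
        = tRun p M (L.map fun i => (i, j)) (tStep p M (i, j) s') := by
      intro s'; simp [tRun]
    have hmapcons : (i :: L).map s.1 = s.1 i :: L.map s.1 := rfl
    by_cases h : (p : ℤ) ∣ s.1 i + s.2 j
    · have ht : tStep p M (i, j) s = s := by simp [tStep, h]
      obtain ⟨ih1, ih2, ih3⟩ := ih s hndL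
      rw [hmapcons, colT_cons_pos p _ h]
      refine ⟨?_, ?_, ?_⟩
      · rw [hstep, ht]; exact ih1
      · intro i' hi'
        rw [hstep, ht]
        exact ih2 i' (fun hm => hi' (List.mem_cons_of_mem _ hm))
      · rw [hstep, ht]
        have hhead : (tRun p M (L.map fun i => (i, j)) s).1 i = s.1 i :=
          ih2 i hiL
        simp only [List.map_cons, hhead, ih3]
    · set s' : SState M := (Function.update s.1 i (s.1 i + 1),
        Function.update s.2 j (s.2 j - 1)) with hs'
      have ht : tStep p M (i, j) s = s' := by simp [tStep, h, hs']
      have hs'2 : s'.2 j = s.2 j - 1 := Function.update_self _ _ _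
      have hs'1i : s'.1 i = s.1 i + 1 := Function.update_self _ _ _
      have hmap : L.map s'.1 = L.map s.1 := by
        apply List.map_congr_left
        intro a ha
        have hne : a ≠ i := by rintro rfl; exact hiL ha
        exact Function.update_of_ne hne _ _
      obtain ⟨ih1, ih2, ih3⟩ := ih s' hndL
      rw [hmapcons, colT_cons_neg p _ h]
      refine ⟨?_, ?_, ?_⟩
      · rw [hstep, ht, ih1, hs'2, hmap]
        show Function.update (Function.update s.2 j (s.2 j - 1)) j _ = _
        rw [Function.update_idem]
      · intro i' hi'
        rw [hstep, ht]
        have h1 : i' ∉ L := fun hm => hi' (List.mem_cons_of_mem _ hm)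
        have h2 : i' ≠ i := fun he => hi' (he ▸ List.mem_cons_self)
        rw [ih2 i' h1]
        exact Function.update_of_ne h2 _ _
      · rw [hstep, ht]
        have hhead : (tRun p M (L.map fun i => (i, j)) s').1 i = s'.1 i :=
          ih2 i hiL
        simp only [List.map_cons, hhead, ih3, hs'1i, hs'2, hmap, Function.update_self]

lemma mem_finRange_drop {n k : ℕ} {i : Fin n} :
    i ∈ (List.finRange n).drop k ↔ k ≤ i.val := by
  constructor
  · intro h
    obtain ⟨m, hm, he⟩ := List.mem_iff_getElem.mp h
    rw [List.getElem_drop] at he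
    have hv : i.val = k + m := by
      rw [← he]; simp [List.getElem_finRange]
    omega
  · intro h
    refine List.mem_iff_getElem.mpr ⟨i.val - k, ?_, ?_⟩
    · simp only [List.length_drop, List.length_finRange]
      omega
    · rw [List.getElem_drop]
      apply Fin.ext
      simp [List.getElem_finRange]
      omega

lemma filt_eq_drop {M : ℕ} (j : Fin M) :
    (List.finRange M).filter (fun i => j ≤ i) = (List.finRange M).drop j.val := by
  conv_lhs => rw [← List.take_append_drop j.val (List.finRange M)]
  rw [List.filter_append]
  have h1 : (List.take j.val (List.finRange M)).filter (fun i => j ≤ i) = [] := by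
    rw [List.filter_eq_nil_iff]
    intro a ha
    obtain ⟨m, hm, he⟩ := List.mem_iff_getElem.mp ha
    rw [List.getElem_take] at he
    have hmlt : m < j.val := by
      have := hm
      simp only [List.length_take, List.length_finRange] at this
      omega
    have hv : a.val = m := by rw [← he]; simp [List.getElem_finRange]
    simp only [decide_eq_true_eq, Fin.le_def]
    omega
  have h2 : ((List.finRange M).drop j.val).filter (fun i => j ≤ i)
      = (List.finRange M).drop j.val := by
    rw [List.filter_eq_self]
    intro a ha
    have := mem_finRange_drop.mp ha
    simp only [decide_eq_true_eq, Fin.le_def]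
    omega
  rw [h1, h2, List.nil_append]

/-- The tail (columns `k, k+1, …, M-1`) of the reversed Version 1 order. -/
def colsFrom (M : ℕ) (k : ℕ) : List (Fin M × Fin (M + 1)) :=
  (((List.finRange M).drop k).reverse).flatMap fun j =>
    ((List.finRange M).filter (fun i => j ≤ i)).map fun i => (i, j.castSucc)

lemma order1_reverse (M : ℕ) : (order1 M).reverse = colsFrom M 0 := by
  unfold order1 colsFrom
  rw [List.reverse_flatMap, List.drop_zero]
  congr 1
  funext j
  show (((List.finRange M).reverse.filter (fun i => j ≤ i)).map fun i => (i, j.castSucc)).reverse = _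
  rw [List.filter_reverse, ← List.map_reverse, List.reverse_reverse]

lemma colsFrom_succ (M k : ℕ) (hk : k < M) :
    colsFrom M k = colsFrom M (k + 1)
      ++ (((List.finRange M).drop k).map fun i =>
            (i, ((List.finRange M)[k]'(by simpa using hk)).castSucc)) := by
  unfold colsFrom
  rw [List.drop_eq_getElem_cons (by simpa using hk : k < (List.finRange M).length)]
  rw [List.reverse_cons, List.flatMap_append]
  simp only [List.flatMap_cons, List.flatMap_nil, List.append_nil]
  rw [filt_eq_drop]
  rw [show ((List.finRange M)[k]'(by simpa using hk)).val = k from by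
    simp [List.getElem_finRange]]
  congr 1
  rw [List.drop_eq_getElem_cons (by simpa using hk : k < (List.finRange M).length)]

end SergBridge


section SergFinal

lemma chain_map_finRange_iff {n : ℕ} (f : Fin n → ℤ) :
    List.Chain' (· ≥ ·) ((List.finRange n).map f) ↔ Antitone f := by
  rw [List.Chain', List.isChain_iff_getElem]
  constructor
  · intro h
    cases n with
    | zero => intro a; exact a.elim0
    | succ m =>
      rw [Fin.antitone_iff_succ_le]
      intro i
      have hh := h i.val (by simp)
      simp only [List.get_eq_getElem, List.getElem_map, List.getElem_finRange,
        Fin.cast_mk] at hh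
      exact hh
  · intro h i hi
    simp only [List.get_eq_getElem, List.getElem_map, List.getElem_finRange,
      Fin.cast_mk]
    exact h (by simp [Fin.le_def])

lemma MC_of (p : ℕ) : ∀ (la th : List ℤ),
    (∀ (i : ℕ) (h1 : i + 1 < la.length) (h2 : i + 1 < th.length),
        la[i] = la[i+1] → (p : ℤ) ∣ la[i+1] + th[i+1]) →
    (∀ (i : ℕ) (h1 : i < la.length) (h2 : i + 1 < th.length),
        th[i] = th[i+1] → (p : ℤ) ∣ la[i] + th[i]) →
    MC p la th := by
  intro la
  induction la with
  | nil => intro th _ _; cases th with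
    | nil => trivial
    | cons t ts => cases ts <;> trivial
  | cons x xs ih =>
    intro th H1 H2
    match th with
    | [] => trivial
    | [t] => trivial
    | t :: t₂ :: ts =>
      refine (MC_cons p x t t₂ xs ts).mpr ⟨?_, ?_, ?_⟩
      · intro x₂ hx₂ he
        cases xs with
        | nil => simp at hx₂
        | cons a ys =>
          simp only [List.head?_cons, Option.mem_def, Option.some.injEq] at hx₂
          subst hx₂
          have := H1 0 (by simp) (by simp)
          simp only [List.getElem_cons_succ, List.getElem_cons_zero] at this
          exact this he
      · intro he
        have := H2 0 (by simp) (by simp)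
        simp only [List.getElem_cons_succ, List.getElem_cons_zero] at this
        exact this he
      · apply ih
        · intro i h1 h2 he
          have h1' : i + 1 + 1 < (x :: xs).length := by simpa using h1
          have h2' : i + 1 + 1 < (t :: t₂ :: ts).length := by
            simp only [List.length_cons] at h2 ⊢; omega
          have := H1 (i+1) h1' h2'
          simp only [List.getElem_cons_succ] at this
          exact this he
        · intro i h1 h2 he
          have h1' : i + 1 < (x :: xs).length := by simpa using h1
          have h2' : i + 1 + 1 < (t :: t₂ :: ts).length := by
            simp only [List.length_cons] at h2 ⊢; omega
          have := H2 (i+1) h1' h2'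
          simp only [List.getElem_cons_succ] at this
          exact this he

lemma TkBridge (p M : ℕ) : ∀ (d k : ℕ), k + d = M → ∀ s : SState M,
    (∀ i : Fin M, i.val < k → (tRun p M (colsFrom M k) s).1 i = s.1 i) ∧
    (∀ j : Fin (M + 1), j.val < k → (tRun p M (colsFrom M k) s).2 j = s.2 j) ∧
    ((List.finRange M).drop k).map (tRun p M (colsFrom M k) s).1
      = (TT p (((List.finRange M).drop k).map s.1)
          (((List.finRange (M + 1)).drop k).map s.2)).1 ∧
    ((List.finRange (M + 1)).drop k).map (tRun p M (colsFrom M k) s).2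
      = (TT p (((List.finRange M).drop k).map s.1)
          (((List.finRange (M + 1)).drop k).map s.2)).2 := by
  intro d
  induction d with
  | zero =>
    intro k hk s
    have hkM : k = M := by omega
    subst hkM
    have hd1 : (List.finRange k).drop k = [] := by simp
    have hrun : tRun p k (colsFrom k k) s = s := by
      simp [colsFrom, hd1, tRun]
    rw [hrun, hd1]
    refine ⟨fun _ h => rfl, fun _ h => rfl, ?_, ?_⟩ <;> simp [TT_nil]
  | succ d ih =>
    intro k hk s
    have hkM : k < M := by omega
    have hkfin : k < (List.finRange M).length := by simpa using hkM
    set jk : Fin M := (List.finRange M)[k]'hkfin with hjkdef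
    have hjk : jk.val = k := by simp [hjkdef, List.getElem_finRange]
    have hkfin' : k < (List.finRange (M+1)).length := by simp; omega
    set jθ : Fin (M+1) := (List.finRange (M+1))[k]'hkfin' with hjθdef
    have hjθ : jθ.val = k := by simp [hjθdef, List.getElem_finRange]
    have hjkc : jk.castSucc = jθ := by
      apply Fin.ext; rw [Fin.coe_castSucc, hjk, hjθ]
    obtain ⟨ih1, ih2, ih3, ih4⟩ := ih (k+1) (by omega) s
    have hsplit : tRun p M (colsFrom M k) s
        = tRun p M (((List.finRange M).drop k).map fun i => (i, jk.castSucc))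
            (tRun p M (colsFrom M (k+1)) s) := by
      rw [colsFrom_succ M k hkM]
      simp [tRun, List.foldl_append, hjkdef]
    set s' := tRun p M (colsFrom M (k+1)) s with hs'
    set L := (List.finRange M).drop k with hL
    have hLnd : L.Nodup := (List.drop_sublist _ _).nodup (List.nodup_finRange M)
    obtain ⟨cb1, cb2, cb3⟩ := colBridge p M jk.castSucc L s' hLnd
    have hLcons : L = jk :: (List.finRange M).drop (k+1) := by
      rw [hL, List.drop_eq_getElem_cons hkfin]
    have hθcons : (List.finRange (M+1)).drop k = jθ :: (List.finRange (M+1)).drop (k+1) := by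
      rw [List.drop_eq_getElem_cons hkfin']
    have hs'jk : s'.1 jk = s.1 jk := ih1 jk (by omega)
    have hs'θ : s'.2 (jk.castSucc) = s.2 jθ := by
      rw [hjkc]; exact ih2 jθ (by omega)
    have hmapL : L.map s'.1 = s.1 jk :: (TT p (((List.finRange M).drop (k+1)).map s.1)
        (((List.finRange (M+1)).drop (k+1)).map s.2)).1 := by
      rw [hLcons, List.map_cons, hs'jk, ih3]
    refine ⟨?_, ?_, ?_, ?_⟩
    · intro i hi
      rw [hsplit]
      have hnot : i ∉ L := by
        intro hm
        rw [hL] at hm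
        have := mem_finRange_drop.mp hm
        omega
      rw [cb2 i hnot]
      exact ih1 i (by omega)
    · intro j hj
      rw [hsplit, cb1]
      have hne : j ≠ jk.castSucc := by
        intro he
        rw [he, Fin.coe_castSucc, hjk] at hj
        omega
      rw [Function.update_of_ne hne]
      exact ih2 j (by omega)
    · rw [hsplit, cb3, hs'θ, hmapL]
      conv_rhs => rw [hLcons, hθcons]
      simp only [List.map_cons, TT_cons]
    · rw [hsplit]
      conv_lhs => rw [hθcons]
      rw [List.map_cons]
      have hRjθ : (tRun p M (L.map fun i => (i, jk.castSucc)) s').2 jθ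
          = (colT p (s'.2 jk.castSucc) (L.map s'.1)).1 := by
        rw [cb1, ← hjkc, Function.update_self]
      have htail : ((List.finRange (M+1)).drop (k+1)).map
            (tRun p M (L.map fun i => (i, jk.castSucc)) s').2
          = ((List.finRange (M+1)).drop (k+1)).map s'.2 := by
        apply List.map_congr_left
        intro a ha
        rw [cb1]
        apply Function.update_of_ne
        intro he
        have hge := mem_finRange_drop.mp ha
        rw [he, Fin.coe_castSucc, hjk] at hge
        omega
      rw [hRjθ, htail, ih4, hs'θ, hmapL]
      conv_rhs => rw [hLcons, hθcons]
      simp only [List.map_cons, TT_cons]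

end SergFinal

/-- `𝕄 ⊆ S₁(A)`. -/
theorem serganova_image_supset (p M : ℕ) (hp : p.Prime) (hM : 1 ≤ M) :
    setM p M ⊆ S1 p M '' domA M := by
  intro s hs
  obtain ⟨hA1, hA2, hc1, hc2⟩ := hs
  have hT : T1 p M s = tRun p M (colsFrom M 0) s := by
    rw [T1, order1_reverse]
  obtain ⟨-, -, h3, h4⟩ := TkBridge p M M 0 (by omega) s
  simp only [List.drop_zero] at h3 h4
  have hch1 : List.Chain' (· ≥ ·) ((List.finRange M).map s.1) :=
    (chain_map_finRange_iff s.1).mpr hA1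
  have hch2 : List.Chain' (· ≥ ·) ((List.finRange (M+1)).map s.2) :=
    (chain_map_finRange_iff s.2).mpr hA2
  have hmc : MC p ((List.finRange M).map s.1) ((List.finRange (M+1)).map s.2) := by
    apply MC_of
    · intro i h1 h2 he
      simp only [List.getElem_map, List.getElem_finRange, Fin.cast_mk] at he ⊢
      have h1' : i + 1 < M := by simpa using h1
      exact hc1 i h1' he
    · intro i h1 h2 he
      simp only [List.getElem_map, List.getElem_finRange, Fin.cast_mk] at he ⊢
      have h1' : i < M := by simpa using h1
      exact hc2 i h1' he
  obtain ⟨hg1, hg2⟩ := TT_good p ((List.finRange M).map s.1)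
    ((List.finRange (M+1)).map s.2) (by simp) hch1 hch2 hmc
  refine ⟨T1 p M s, ⟨?_, ?_⟩, ?_⟩
  · apply (chain_map_finRange_iff _).mp
    rw [hT, h3]
    exact hg1
  · apply (chain_map_finRange_iff _).mp
    rw [hT, h4]
    exact hg2
  · exact sRun_tRun p M (order1 M) s
end

section
/- Let p be a prime and M ≥ 1 an integer, and let (λ,θ) ∈ A. Then at every intermediate stage of the Version 1 Serganova algorithm applied to (λ,θ), the current λ-sequence is nonincreasing: for every k, the sequence λ^{(k)} obtained after the first k steps satisfies λ^{(k)}_1 ≥ λ^{(k)}_2 ≥ … ≥ λ^{(k)}_M. In particular the λ-component of S₁(λ,θ) is nonincreasing. -/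
open Function

open List

/-- aux stuff -/
def serR (M : ℕ) (a b : Fin M × Fin (M + 1)) : Prop :=
  b.1.val + 1 < M → a.1.val = b.1.val + 1 ∧ a.2 = b.2

def serBlk (M : ℕ) (j : Fin M) : List (Fin M) :=
  (List.finRange M).reverse.filter fun i => j ≤ i

def serG (M : ℕ) (j : Fin M) : List (Fin M × Fin (M + 1)) :=
  (serBlk M j).map fun i => (i, j.castSucc)

lemma order1_eq (M : ℕ) : order1 M = (List.finRange M).flatMap (serG M) := rfl

lemma serBlk_val' (M j : ℕ) (hj : j < M) :
    ((((List.finRange M).reverse.filter fun i => (⟨j, hj⟩ : Fin M) ≤ i)).map Fin.val)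
    = (List.range (M - j)).map (fun t => M - 1 - t) := by
  have h1 : (fun i : Fin M => decide ((⟨j, hj⟩ : Fin M) ≤ i)) = (fun n => decide (j ≤ n)) ∘ Fin.val := by
    funext i; simp [Fin.le_def]
  rw [h1, ← filter_map, map_reverse, map_coe_finRange_eq_range, range_eq_range', reverse_range']
  simp only [Nat.zero_add]
  rw [filter_map]
  have h2 : filter ((fun n => decide (j ≤ n)) ∘ fun i => M - 1 - i) (range M)
      = filter (fun t => decide (t < M - j)) (range M) := by
    apply filter_congr
    intro t ht
    simp only [mem_range] at ht
    simp only [Function.comp_apply, decide_eq_decide]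
    omega
  rw [h2]
  congr 1
  have h3 : M = (M - j) + j := by omega
  rw [h3, range_add, filter_append]; simp only [Nat.add_sub_cancel]
  have h4 : filter (fun t => decide (t < M - j)) (range (M - j)) = range (M - j) := by
    rw [filter_eq_self]; intro a ha; simp only [mem_range] at ha; simpa using ha
  have h5 : filter (fun t => decide (t < M - j)) (map (fun x => M - j + x) (range j)) = [] := by
    rw [filter_eq_nil_iff]; intro a ha; simp only [mem_map, mem_range] at ha
    obtain ⟨x, hx, rfl⟩ := ha; simp
  rw [h4, h5, append_nil]

lemma serBlk_val (M : ℕ) (j : Fin M) :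
    (serBlk M j).map Fin.val = (List.range (M - j.val)).map (fun t => M - 1 - t) := by
  have := serBlk_val' M j.val j.isLt
  unfold serBlk
  rw [← this]

lemma serBlk_head (M : ℕ) (j : Fin M) :
    ∀ i ∈ (serBlk M j).head?, i.val = M - 1 := by
  intro i hi
  have h := serBlk_val M j
  have hlt : 0 < M - j.val := by omega
  obtain ⟨n, hn⟩ : ∃ n, M - j.val = n + 1 := ⟨M - j.val - 1, by omega⟩
  have := congrArg List.head? h
  rw [head?_map, hn, range_succ_eq_map] at this
  simp only [map_cons, head?_cons] at this
  rw [Option.mem_def] at hi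
  rw [hi] at this
  simp only [Option.map_some, Option.some_inj] at this
  omega

lemma serBlk_ne_nil (M : ℕ) (j : Fin M) : serBlk M j ≠ [] := by
  intro h
  have h1 := serBlk_val M j
  rw [h] at h1
  have : M - j.val = 0 → False := by omega
  apply this
  by_contra hne
  obtain ⟨n, hn⟩ : ∃ n, M - j.val = n + 1 := ⟨M - j.val - 1, by omega⟩
  rw [hn, range_succ_eq_map] at h1
  simp at h1

lemma serBlk_chain (M : ℕ) (j : Fin M) :
    Chain' (fun a b : Fin M => a.val = b.val + 1) (serBlk M j) := by
  have key : Chain' (fun a b : ℕ => a = b + 1) ((serBlk M j).map Fin.val) := by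
    rw [serBlk_val, List.Chain', isChain_iff_getElem]
    intro i hi
    simp only [length_map, length_range] at hi
    simp only [get_eq_getElem, getElem_map, getElem_range]
    omega
  rw [List.Chain', isChain_map] at key
  exact key

lemma serG_chain (M : ℕ) (j : Fin M) : Chain' (serR M) (serG M j) := by
  unfold serG
  rw [List.Chain', isChain_map]
  apply IsChain.imp (p := serBlk_chain M j)
  intro a b hab
  intro _
  exact ⟨hab, rfl⟩

lemma serG_head (M : ℕ) (j : Fin M) :
    ∀ a ∈ (serG M j).head?, a.1.val = M - 1 := by
  intro a ha
  unfold serG at ha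
  rw [head?_map] at ha
  cases hh : (serBlk M j).head? with
  | none => rw [hh] at ha; simp at ha
  | some i =>
    rw [hh] at ha
    simp only [Option.map_some, Option.mem_def, Option.some_inj] at ha
    rw [← ha]
    exact serBlk_head M j i hh

lemma flat_head (M : ℕ) (js : List (Fin M)) :
    ∀ a ∈ (js.flatMap (serG M)).head?, a.1.val = M - 1 := by
  intro a ha
  cases js with
  | nil => simp at ha
  | cons j js =>
    rw [flatMap_cons, head?_append] at ha
    cases hh : (serG M j).head? with
    | none =>
      exfalso
      have : serBlk M j = [] := by
        unfold serG at hh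
        rw [head?_map] at hh
        cases h : (serBlk M j) with
        | nil => rfl
        | cons x xs => rw [h] at hh; simp at hh
      exact serBlk_ne_nil M j this
    | some b =>
      rw [hh] at ha
      simp only [Option.some_or, Option.mem_def, Option.some_inj] at ha
      rw [← ha]
      exact serG_head M j b hh

lemma flat_chain (M : ℕ) (js : List (Fin M)) :
    Chain' (serR M) (js.flatMap (serG M)) := by
  induction js with
  | nil => exact isChain_nil
  | cons j js ih =>
    rw [flatMap_cons]
    apply IsChain.append (serG_chain M j) ih
    intro x _ y hy
    intro hlt
    exfalso
    have := flat_head M js y hy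
    omega

/-- The frontier condition for the head of the remaining list. -/
def serFront (p M : ℕ) (s : SState M) (a : Fin M × Fin (M + 1)) : Prop :=
  ∀ h : a.1.val + 1 < M,
    (p : ℤ) ∣ s.1 ⟨a.1.val + 1, h⟩ + s.2 a.2 ∨ s.1 ⟨a.1.val + 1, h⟩ < s.1 a.1

lemma step_antitone (p M : ℕ) (s : SState M) (a : Fin M × Fin (M + 1))
    (hA : Antitone s.1) (hf : serFront p M s a) :
    Antitone (sStep p M a s).1 := by
  unfold sStep
  split
  · exact hA
  · rename_i hdvd
    intro x y hxy
    simp only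
    rcases eq_or_ne y a.1 with hy | hy
    · rcases eq_or_ne x a.1 with hx | hx
      · rw [hx, hy]
      · rw [hy, update_self, update_of_ne hx]
        have : s.1 a.1 ≤ s.1 x := hA (hy ▸ hxy)
        omega
    · rw [update_of_ne hy]
      rcases eq_or_ne x a.1 with hx | hx
      · rw [hx, update_self]
        have hlt : a.1.val + 1 ≤ y.val := by
          have : x < y := lt_of_le_of_ne hxy (by intro h; exact hy (h ▸ hx))
          have := Fin.lt_def.mp this
          omega
        have h1 : a.1.val + 1 < M := lt_of_le_of_lt hlt y.isLt
        have h2 : s.1 y ≤ s.1 ⟨a.1.val + 1, h1⟩ := hA (by simpa [Fin.le_def] using hlt)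
        have h3 : s.1 ⟨a.1.val + 1, h1⟩ < s.1 a.1 := by
          rcases hf h1 with hd | hlt'
          · rcases lt_or_eq_of_le (hA (show a.1 ≤ ⟨a.1.val + 1, h1⟩ by simp [Fin.le_def])) with h | h
            · exact h
            · exfalso; exact hdvd (h ▸ hd)
          · exact hlt'
        omega
      · rw [update_of_ne hx]
        exact hA hxy

lemma step_front (p M : ℕ) (s : SState M) (a b : Fin M × Fin (M + 1))
    (hA : Antitone s.1) (hR : serR M a b) :
    serFront p M (sStep p M a s) b := by
  intro h
  obtain ⟨h1, h2⟩ := hR h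
  have hab : a.1 = ⟨b.1.val + 1, h⟩ := by ext; exact h1
  have hne : b.1 ≠ a.1 := by rw [hab]; intro hh; have := congrArg Fin.val hh; simp at this
  unfold sStep
  split
  · rename_i hdvd
    left
    rw [← hab, ← h2]
    exact hdvd
  · simp only
    right
    rw [← hab, update_self, update_of_ne hne]
    have : s.1 a.1 ≤ s.1 b.1 := hA (by rw [hab]; simp [Fin.le_def])
    omega

lemma serRun_antitone (p M : ℕ) :
    ∀ (l : List (Fin M × Fin (M + 1))) (s : SState M),
      Antitone s.1 →
      (∀ a ∈ l.head?, serFront p M s a) →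
      Chain' (serR M) l →
      ∀ k, Antitone (sRun p M (l.take k) s).1 := by
  intro l
  induction l with
  | nil => intro s hA _ _ k; simpa [sRun] using hA
  | cons a t ih =>
    intro s hA hhead hchain k
    cases k with
    | zero => simpa [sRun] using hA
    | succ k =>
      rw [take_succ_cons]
      have hrun : sRun p M (a :: t.take k) s = sRun p M (t.take k) (sStep p M a s) := rfl
      rw [hrun]
      apply ih (sStep p M a s)
      · exact step_antitone p M s a hA (hhead a rfl)
      · intro b hb
        exact step_front p M s a b hA (IsChain.rel_head? hchain hb)
      · exact IsChain.tail hchain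

/-- At every intermediate stage of the Version 1 algorithm applied to a
dominant pair, the current `λ`-sequence is nonincreasing; in particular the `λ`-component
of `S₁(λ,θ)` is nonincreasing. -/
theorem serganova_v1_lambda_antitone (p M : ℕ) (hp : p.Prime) (hM : 1 ≤ M)
    (s : SState M) (hs : s ∈ domA M) :
    (∀ k : ℕ, Antitone (sRun p M ((order1 M).take k) s).1) ∧
    Antitone (S1 p M s).1 := by
  have H : ∀ k : ℕ, Antitone (sRun p M ((order1 M).take k) s).1 := by
    intro k
    apply serRun_antitone p M (order1 M) s hs.1 _ _ k
    · intro a ha h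
      exfalso
      rw [order1_eq] at ha
      have := flat_head M (List.finRange M) a ha
      omega
    · rw [order1_eq]
      exact flat_chain M (List.finRange M)
  refine ⟨H, ?_⟩
  have := H (order1 M).length
  rwa [List.take_length] at this
end

section
/- Let p be a prime and M ≥ 1 an integer, and let (λ,θ) ∈ A. Then at every intermediate stage of the Version 2 Serganova algorithm applied to (λ,θ), the current θ-sequence is nonincreasing: for every k, the sequence θ^{(k)} obtained after the first k steps satisfies θ^{(k)}_1 ≥ θ^{(k)}_2 ≥ … ≥ θ^{(k)}_{M+1}. In particular the θ-component of S₂(λ,θ) is nonincreasing. -/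
open Function

section Aux

/-- Running along an appended list. -/
lemma sRun_append (p M : ℕ) (l1 l2 : List (Fin M × Fin (M + 1))) (s : SState M) :
    sRun p M (l1 ++ l2) s = sRun p M l2 (sRun p M l1 s) :=
  List.foldl_append

/-- The first `t` steps of row `i` (0-based): pairs `(i,0),(i,1),…,(i,t-1)`. -/
def rowT (M : ℕ) (i : Fin M) (t : ℕ) : List (Fin M × Fin (M + 1)) :=
  ((List.finRange (M + 1)).take t).map fun j => (i, j)

lemma rowT_succ (M : ℕ) (i : Fin M) (t : ℕ) (ht : t < M + 1) :
    rowT M i (t + 1) = rowT M i t ++ [(i, ⟨t, ht⟩)] := by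
  unfold rowT
  rw [List.take_succ, List.getElem?_eq_getElem (by simpa using ht)]
  simp [List.getElem_finRange, Fin.cast]

lemma rowT_take (M : ℕ) (i : Fin M) (t u : ℕ) :
    (rowT M i u).take t = rowT M i (min t u) := by
  unfold rowT
  rw [← List.map_take, List.take_take]


/-- Key row invariant: running `t` steps of row `i` from a state with antitone `θ`
keeps `θ` antitone, and moreover an equality `θ_{t-1} = θ_t` after these steps
forces `p ∣ λ_i + θ_{t-1}`. -/
lemma row_inv (p M : ℕ) (i : Fin M) :
    ∀ (t : ℕ), t ≤ M + 1 → ∀ s : SState M, Antitone s.2 →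
      Antitone (sRun p M (rowT M i t) s).2 ∧
      (∀ (_ : 1 ≤ t) (htM : t ≤ M),
        (sRun p M (rowT M i t) s).2 ⟨t - 1, by omega⟩ =
          (sRun p M (rowT M i t) s).2 ⟨t, by omega⟩ →
        (p : ℤ) ∣ (sRun p M (rowT M i t) s).1 i +
          (sRun p M (rowT M i t) s).2 ⟨t - 1, by omega⟩) := by
  intro t
  induction t with
  | zero =>
    intro _ s hs
    refine ⟨by simpa [rowT, sRun] using hs, ?_⟩
    intro h1; omega
  | succ t ih =>
    intro ht s hs
    have ht' : t < M + 1 := by omega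
    obtain ⟨ih1, ih2⟩ := ih (by omega) s hs
    set s' := sRun p M (rowT M i t) s with hs'
    have hrun : sRun p M (rowT M i (t + 1)) s = sStep p M (i, ⟨t, ht'⟩) s' := by
      rw [rowT_succ M i t ht', sRun_append]
      rfl
    by_cases hdvd : (p : ℤ) ∣ s'.1 i + s'.2 ⟨t, ht'⟩
    · have hstep : sStep p M (i, ⟨t, ht'⟩) s' = s' := by
        unfold sStep; rw [if_pos hdvd]
      rw [hrun, hstep]
      refine ⟨ih1, ?_⟩
      intro _ htM heq
      simpa using hdvd
    · -- the step changes the state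
      have hstep : sStep p M (i, ⟨t, ht'⟩) s' =
          (Function.update s'.1 i (s'.1 i - 1),
           Function.update s'.2 ⟨t, ht'⟩ (s'.2 ⟨t, ht'⟩ + 1)) := by
        unfold sStep; rw [if_neg hdvd]
      rw [hrun, hstep]
      dsimp only
      -- a predecessor θ_{t-1} (if any) is strictly bigger than θ_t
      have hpred : ∀ a : Fin (M + 1), a < ⟨t, ht'⟩ → s'.2 ⟨t, ht'⟩ < s'.2 a := by
        intro a ha
        have h1t : 1 ≤ t := by
          have := ha; simp [Fin.lt_def] at this; omega
        have htM : t ≤ M := by omega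
        have hne : s'.2 ⟨t - 1, by omega⟩ ≠ s'.2 ⟨t, by omega⟩ := by
          intro heq
          apply hdvd
          have := ih2 h1t htM (by simpa using heq)
          have he : (⟨t - 1 + 1, by omega⟩ : Fin (M + 1)) = ⟨t, ht'⟩ := by
            ext; simp; omega
          rw [heq] at this
          simpa using this
        have ha' : a.val < t := by simpa [Fin.lt_def] using ha
        have hle1 : s'.2 ⟨t, ht'⟩ ≤ s'.2 ⟨t - 1, by omega⟩ :=
          ih1 (show (t : ℕ) - 1 ≤ t by omega)
        have hle2 : s'.2 ⟨t - 1, by omega⟩ ≤ s'.2 a :=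
          ih1 (show a.val ≤ t - 1 by omega)
        have : s'.2 ⟨t, ht'⟩ < s'.2 ⟨t - 1, by omega⟩ := lt_of_le_of_ne hle1 (by
          intro h; exact hne h.symm)
        exact lt_of_lt_of_le this hle2
      constructor
      · -- antitone of updated θ
        intro a b hab
        rcases eq_or_lt_of_le hab with rfl | hab
        · exact le_rfl
        by_cases hbt : b = ⟨t, ht'⟩
        · subst hbt
          rw [Function.update_self, Function.update_of_ne (by exact ne_of_lt hab)]
          have := hpred a hab
          omega
        · rw [Function.update_of_ne hbt]
          by_cases hat : a = ⟨t, ht'⟩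
          · subst hat
            rw [Function.update_self]
            have : s'.2 b ≤ s'.2 ⟨t, ht'⟩ := ih1 (le_of_lt hab)
            omega
          · rw [Function.update_of_ne hat]
            exact ih1 (le_of_lt hab)
      · -- new invariant at t+1
        intro _ htM1 heq
        exfalso
        have e1 : (⟨t + 1 - 1, by omega⟩ : Fin (M + 1)) = ⟨t, ht'⟩ := rfl
        rw [e1, Function.update_self,
          Function.update_of_ne (by simp [Fin.ext_iff])] at heq
        have : s'.2 ⟨t + 1, by omega⟩ ≤ s'.2 ⟨t, ht'⟩ :=
          ih1 (by simp [Fin.le_def])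
        omega


/-- Preservation of a predicate along prefixes of a flatMap, given preservation
along prefixes of each block. -/
lemma sRun_flatMap_take_pres (p M : ℕ) (P : SState M → Prop) :
    ∀ (L : List (Fin M)) (f : Fin M → List (Fin M × Fin (M + 1))),
      (∀ x ∈ L, ∀ (t : ℕ) (s : SState M), P s → P (sRun p M ((f x).take t) s)) →
      ∀ (k : ℕ) (s : SState M), P s → P (sRun p M ((L.flatMap f).take k) s) := by
  intro L f
  induction L with
  | nil => intro _ k s hs; simpa [sRun] using hs
  | cons x L ih =>
    intro h k s hs
    rw [List.flatMap_cons, List.take_append, sRun_append]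
    exact ih (fun y hy t s' hs' => h y (List.mem_cons_of_mem _ hy) t s' hs') _ _
      (h x List.mem_cons_self k s hs)

lemma filter_finRange_map_val (M : ℕ) (i : Fin M) :
    (((List.finRange M).filter fun j => j ≤ i).map Fin.val)
      = List.range (i.val + 1) := by
  have hp : (fun j : Fin M => decide (j ≤ i)) = ((fun n => decide (n ≤ i.val)) ∘ Fin.val) := by
    funext j; exact decide_eq_decide.mpr Fin.le_def
  have hr : List.range M
      = List.range (i.val + 1) ++ (List.range (M - i.val - 1)).map (i.val + 1 + ·) := by
    rw [← List.range_add]; congr 1; omega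
  rw [hp, ← List.filter_map, List.map_coe_finRange_eq_range, hr, List.filter_append]
  rw [List.filter_eq_self.mpr, List.filter_eq_nil_iff.mpr]
  · simp
  · intro a ha
    simp only [List.mem_map, List.mem_range] at ha
    obtain ⟨b, hb, rfl⟩ := ha
    simp; omega
  · intro a ha
    simp only [List.mem_range] at ha
    simp; omega

lemma rowFull_eq (M : ℕ) (i : Fin M) :
    (((List.finRange M).filter fun j => j ≤ i).map fun j => (i, j.castSucc))
      = rowT M i (i.val + 1) := by
  have key : (((List.finRange M).filter fun j => j ≤ i).map Fin.castSucc)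
      = (List.finRange (M + 1)).take (i.val + 1) := by
    apply List.map_injective_iff.mpr Fin.val_injective
    rw [List.map_map]
    have h1 : (Fin.val ∘ Fin.castSucc) = (Fin.val : Fin M → ℕ) := by
      funext j; simp
    rw [h1, filter_finRange_map_val, List.map_take, List.map_coe_finRange_eq_range,
      List.take_range]
    congr 1
    have := i.isLt
    omega
  calc (((List.finRange M).filter fun j => j ≤ i).map fun j => (i, j.castSucc))
      = (((List.finRange M).filter fun j => j ≤ i).map Fin.castSucc).map fun j => (i, j) := by
        rw [List.map_map]; rfl
    _ = rowT M i (i.val + 1) := by rw [key]; rfl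

lemma order2_eq (M : ℕ) :
    order2 M = (List.finRange M).reverse.flatMap fun i => rowT M i (i.val + 1) := by
  unfold order2
  congr 1
  funext i
  exact rowFull_eq M i

end Aux

/-- At every intermediate stage of the Version 2 algorithm applied to a
dominant pair, the current `θ`-sequence is nonincreasing; in particular the `θ`-component
of `S₂(λ,θ)` is nonincreasing. -/
theorem serganova_v2_theta_antitone (p M : ℕ) (hp : p.Prime) (hM : 1 ≤ M)
    (s : SState M) (hs : s ∈ domA M) :
    (∀ k : ℕ, Antitone (sRun p M ((order2 M).take k) s).2) ∧
    Antitone (S2 p M s).2 := by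
  have key : ∀ k : ℕ, Antitone (sRun p M ((order2 M).take k) s).2 := by
    intro k
    rw [order2_eq]
    refine sRun_flatMap_take_pres p M (fun s => Antitone s.2) _ _ ?_ k s hs.2
    intro i _ t s' hs'
    rw [rowT_take]
    exact (row_inv p M i (min t (i.val + 1)) (by have := i.isLt; omega) s' hs').1
  refine ⟨key, ?_⟩
  have h2 : S2 p M s = sRun p M ((order2 M).take (order2 M).length) s := by
    rw [List.take_length]; rfl
  rw [h2]
  exact key _
end

section
/- Let p be a prime and M ≥ 1 an integer, and let (λ̃,θ̃) ∈ 𝕄. Then at every intermediate stage of the inverse algorithm T₁ applied to (λ̃,θ̃), the current λ-sequence is nonincreasing; in particular the λ-component of T₁(λ̃,θ̃) satisfies λ_1 ≥ λ_2 ≥ … ≥ λ_M. -/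
open Function

/-! ### Auxiliary machinery for the proof -/

namespace SerganovaInvAux

/-- Build an antitone function on `Fin M` from successive comparisons. -/
lemma antitone_of_succ_le {M : ℕ} (f : Fin M → ℤ)
    (h : ∀ (k : ℕ) (hk : k + 1 < M), f ⟨k + 1, hk⟩ ≤ f ⟨k, Nat.lt_of_succ_lt hk⟩) :
    Antitone f := by
  have key : ∀ (b : ℕ) (hb : b < M) (a : ℕ) (ha : a < M), a ≤ b → f ⟨b, hb⟩ ≤ f ⟨a, ha⟩ := by
    intro b
    induction b with
    | zero =>
      intro hb a ha hab
      have : a = 0 := by omega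
      subst this; exact le_refl _
    | succ n ihn =>
      intro hb a ha hab
      rcases Nat.lt_or_ge a (n + 1) with h' | h'
      · exact le_trans (h n hb) (ihn (Nat.lt_of_succ_lt hb) a ha (by omega))
      · have : a = n + 1 := by omega
        subst this; exact le_refl _
  intro a b hab
  obtain ⟨a, ha⟩ := a
  obtain ⟨b, hb⟩ := b
  rw [Fin.mk_le_mk] at hab
  exact key b hb a ha hab

lemma antitone_apply {M : ℕ} {f : Fin M → ℤ} (hf : Antitone f) {a b : ℕ}
    (ha : a < M) (hb : b < M) (hab : a ≤ b) : f ⟨b, hb⟩ ≤ f ⟨a, ha⟩ :=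
  hf (by rw [Fin.mk_le_mk]; exact hab)

/-- `ℕ`-indexed version of `tStep` (out-of-range indices do nothing). -/
def tStepN (p M : ℕ) (i j : ℕ) (s : SState M) : SState M :=
  if h : i < M ∧ j < M + 1 then tStep p M (⟨i, h.1⟩, ⟨j, h.2⟩) s else s

/-- `ℕ`-indexed version of `tRun`. -/
def tRunN (p M : ℕ) (l : List (ℕ × ℕ)) (s : SState M) : SState M :=
  l.foldl (fun s ij => tStepN p M ij.1 ij.2 s) s

@[simp] lemma tRunN_nil (p M : ℕ) (s : SState M) : tRunN p M [] s = s := rfl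

lemma tRunN_cons (p M i j : ℕ) (l : List (ℕ × ℕ)) (s : SState M) :
    tRunN p M ((i, j) :: l) s = tRunN p M l (tStepN p M i j s) := rfl

lemma tRunN_append (p M : ℕ) (l1 l2 : List (ℕ × ℕ)) (s : SState M) :
    tRunN p M (l1 ++ l2) s = tRunN p M l2 (tRunN p M l1 s) :=
  List.foldl_append

lemma tStepN_of_dvd {p M i j : ℕ} {s : SState M} (hi : i < M) (hj : j < M + 1)
    (h : (p : ℤ) ∣ s.1 ⟨i, hi⟩ + s.2 ⟨j, hj⟩) : tStepN p M i j s = s := by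
  rw [tStepN, dif_pos ⟨hi, hj⟩, tStep, if_pos h]

lemma tStepN_of_not_dvd {p M i j : ℕ} {s : SState M} (hi : i < M) (hj : j < M + 1)
    (h : ¬ (p : ℤ) ∣ s.1 ⟨i, hi⟩ + s.2 ⟨j, hj⟩) :
    tStepN p M i j s =
      (Function.update s.1 ⟨i, hi⟩ (s.1 ⟨i, hi⟩ + 1),
       Function.update s.2 ⟨j, hj⟩ (s.2 ⟨j, hj⟩ - 1)) := by
  rw [tStepN, dif_pos ⟨hi, hj⟩, tStep, if_neg h]

lemma tRun_eq_tRunN (p M : ℕ) (l : List (Fin M × Fin (M + 1))) (s : SState M) :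
    tRun p M l s = tRunN p M (l.map fun ij => (ij.1.val, ij.2.val)) s := by
  induction l generalizing s with
  | nil => rfl
  | cons a l ih =>
    have h1 : tStepN p M a.1.val a.2.val s = tStep p M a s := by
      rw [tStepN, dif_pos ⟨a.1.isLt, a.2.isLt⟩]
    show tRun p M l (tStep p M a s) = _
    rw [List.map_cons, tRunN_cons, h1]
    exact ih _

lemma tStepN_fst_eq {p M : ℕ} (i j : ℕ) {s : SState M} (m : Fin M) (h : i ≠ m.val) :
    (tStepN p M i j s).1 m = s.1 m := by
  rw [tStepN]
  split
  · rw [tStep]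
    split
    · rfl
    · exact Function.update_of_ne (Fin.ne_of_val_ne (Ne.symm h)) _ _
  · rfl

lemma tStepN_snd_eq {p M : ℕ} (i j : ℕ) {s : SState M} (m : Fin (M + 1)) (h : j ≠ m.val) :
    (tStepN p M i j s).2 m = s.2 m := by
  rw [tStepN]
  split
  · rw [tStep]
    split
    · rfl
    · exact Function.update_of_ne (Fin.ne_of_val_ne (Ne.symm h)) _ _
  · rfl

lemma tRunN_fst_eq {p M : ℕ} (l : List (ℕ × ℕ)) {s : SState M} (m : Fin M)
    (h : ∀ ij ∈ l, ij.1 ≠ m.val) : (tRunN p M l s).1 m = s.1 m := by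
  induction l generalizing s with
  | nil => rfl
  | cons a l ih =>
    obtain ⟨i, j⟩ := a
    rw [tRunN_cons, ih (fun ij hij => h ij (List.mem_cons_of_mem _ hij)),
      tStepN_fst_eq i j m (h (i, j) List.mem_cons_self)]

lemma tRunN_snd_eq {p M : ℕ} (l : List (ℕ × ℕ)) {s : SState M} (m : Fin (M + 1))
    (h : ∀ ij ∈ l, ij.2 ≠ m.val) : (tRunN p M l s).2 m = s.2 m := by
  induction l generalizing s with
  | nil => rfl
  | cons a l ih =>
    obtain ⟨i, j⟩ := a
    rw [tRunN_cons, ih (fun ij hij => h ij (List.mem_cons_of_mem _ hij)),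
      tStepN_snd_eq i j m (h (i, j) List.mem_cons_self)]

/-- "All prefixes have antitone `λ`". -/
def APN (p M : ℕ) (l : List (ℕ × ℕ)) (s : SState M) : Prop :=
  ∀ k, Antitone (tRunN p M (l.take k) s).1

lemma APN.antitone_run {p M : ℕ} {l : List (ℕ × ℕ)} {s : SState M} (h : APN p M l s) :
    Antitone (tRunN p M l s).1 := by
  have := h l.length
  rwa [List.take_length] at this

lemma APN.append {p M : ℕ} {l1 l2 : List (ℕ × ℕ)} {s : SState M}
    (h1 : APN p M l1 s) (h2 : APN p M l2 (tRunN p M l1 s)) : APN p M (l1 ++ l2) s := by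
  intro k
  rw [List.take_append, tRunN_append]
  by_cases hk : k ≤ l1.length
  · have h0 : k - l1.length = 0 := by omega
    rw [h0, List.take_zero, tRunN_nil]
    exact h1 k
  · rw [List.take_of_length_le (l := l1) (i := k) (by omega)]
    exact h2 (k - l1.length)

/-- The key inner induction: one phase of `T₁` (fixed `j`, `i` running up from `a`)
keeps `λ` antitone at every intermediate stage, given the entry condition. -/
lemma inner (p M j : ℕ) (hj : j < M) :
    ∀ (n a : ℕ), a + n = M → j ≤ a → ∀ s : SState M, Antitone s.1 →
    (∀ (b : ℕ) (hba : b + 1 = a) (haM : a < M),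
      s.1 ⟨b, by omega⟩ = s.1 ⟨a, haM⟩ → (p : ℤ) ∣ s.1 ⟨a, haM⟩ + s.2 ⟨j, by omega⟩) →
    APN p M ((List.range' a n).map fun i => (i, j)) s := by
  intro n
  induction n with
  | zero =>
    intro a _ _ s hs _ k
    simp only [List.range'_zero, List.map_nil, List.take_nil]
    exact hs
  | succ n ih =>
    intro a han hja s hs hcond
    have haM : a < M := by omega
    have hjM1 : j < M + 1 := by omega
    rw [List.range'_succ, List.map_cons]
    have hmk : ∀ (x : ℕ) (hx : x < M), x = a → (⟨x, hx⟩ : Fin M) = ⟨a, haM⟩ := by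
      intro x hx hxa; subst hxa; rfl
    have main : APN p M ((List.range' (a + 1) n).map fun i => (i, j)) (tStepN p M a j s) := by
      by_cases hd : (p : ℤ) ∣ s.1 ⟨a, haM⟩ + s.2 ⟨j, hjM1⟩
      · rw [tStepN_of_dvd haM hjM1 hd]
        refine ih (a + 1) (by omega) (by omega) s hs ?_
        intro b hba haM' heq
        have hb : b = a := by omega
        subst hb
        rw [← heq]
        exact hd
      · rw [tStepN_of_not_dvd haM hjM1 hd]
        refine ih (a + 1) (by omega) (by omega) _ ?_ ?_
        · -- updated λ is still antitone
          show Antitone (Function.update s.1 ⟨a, haM⟩ (s.1 ⟨a, haM⟩ + 1))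
          apply antitone_of_succ_le
          intro k hk
          by_cases h1 : k + 1 = a
          · have hkM : k < M := by omega
            have e1 : Function.update s.1 ⟨a, haM⟩ (s.1 ⟨a, haM⟩ + 1) ⟨k + 1, hk⟩
                = s.1 ⟨a, haM⟩ + 1 := by
              rw [hmk (k + 1) hk h1, Function.update_self]
            have e2 : Function.update s.1 ⟨a, haM⟩ (s.1 ⟨a, haM⟩ + 1) ⟨k, Nat.lt_of_succ_lt hk⟩
                = s.1 ⟨k, Nat.lt_of_succ_lt hk⟩ :=
              Function.update_of_ne (Fin.ne_of_val_ne (show k ≠ a by omega)) _ _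
            rw [e1, e2]
            have hle : s.1 ⟨a, haM⟩ ≤ s.1 ⟨k, Nat.lt_of_succ_lt hk⟩ :=
              antitone_apply hs (Nat.lt_of_succ_lt hk) haM (show k ≤ a by omega)
            have hne : s.1 ⟨k, Nat.lt_of_succ_lt hk⟩ ≠ s.1 ⟨a, haM⟩ := by
              intro heq
              exact hd (hcond k h1 haM heq)
            omega
          · by_cases h2 : k = a
            · have e1 : Function.update s.1 ⟨a, haM⟩ (s.1 ⟨a, haM⟩ + 1) ⟨k + 1, hk⟩
                  = s.1 ⟨k + 1, hk⟩ :=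
                Function.update_of_ne (Fin.ne_of_val_ne (show k + 1 ≠ a by omega)) _ _
              have e2 : Function.update s.1 ⟨a, haM⟩ (s.1 ⟨a, haM⟩ + 1) ⟨k, Nat.lt_of_succ_lt hk⟩
                  = s.1 ⟨a, haM⟩ + 1 := by
                rw [hmk k (Nat.lt_of_succ_lt hk) h2, Function.update_self]
              rw [e1, e2]
              have hle : s.1 ⟨k + 1, hk⟩ ≤ s.1 ⟨a, haM⟩ :=
                antitone_apply hs haM hk (show a ≤ k + 1 by omega)
              omega
            · have e1 : Function.update s.1 ⟨a, haM⟩ (s.1 ⟨a, haM⟩ + 1) ⟨k + 1, hk⟩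
                  = s.1 ⟨k + 1, hk⟩ :=
                Function.update_of_ne (Fin.ne_of_val_ne (show k + 1 ≠ a by omega)) _ _
              have e2 : Function.update s.1 ⟨a, haM⟩ (s.1 ⟨a, haM⟩ + 1) ⟨k, Nat.lt_of_succ_lt hk⟩
                  = s.1 ⟨k, Nat.lt_of_succ_lt hk⟩ :=
                Function.update_of_ne (Fin.ne_of_val_ne (show k ≠ a by omega)) _ _
              rw [e1, e2]
              exact antitone_apply hs (Nat.lt_of_succ_lt hk) hk (show k ≤ k + 1 by omega)
        · -- the entry condition at `a + 1` holds (vacuously)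
          intro b hba haM' heq
          exfalso
          have hb : b = a := by omega
          subst hb
          have hbM : b < M := haM
          have heq' : Function.update s.1 ⟨b, haM⟩ (s.1 ⟨b, haM⟩ + 1) ⟨b, hbM⟩
              = Function.update s.1 ⟨b, haM⟩ (s.1 ⟨b, haM⟩ + 1) ⟨b + 1, haM'⟩ := heq
          have e1 : Function.update s.1 ⟨b, haM⟩ (s.1 ⟨b, haM⟩ + 1) ⟨b, hbM⟩
              = s.1 ⟨b, haM⟩ + 1 := by
            rw [hmk b hbM rfl, Function.update_self]
          have e2 : Function.update s.1 ⟨b, haM⟩ (s.1 ⟨b, haM⟩ + 1) ⟨b + 1, haM'⟩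
              = s.1 ⟨b + 1, haM'⟩ :=
            Function.update_of_ne (Fin.ne_of_val_ne (show b + 1 ≠ b by omega)) _ _
          rw [e1, e2] at heq'
          have hle : s.1 ⟨b + 1, haM'⟩ ≤ s.1 ⟨b, haM⟩ :=
            antitone_apply hs haM haM' (show b ≤ b + 1 by omega)
          omega
    intro k
    cases k with
    | zero =>
      simp only [List.take_zero]
      exact hs
    | succ k =>
      rw [List.take_succ_cons, tRunN_cons]
      exact main k

/-- The list of steps of phase `j` of `T₁` (in `ℕ` coordinates). -/
def phaseL (M j : ℕ) : List (ℕ × ℕ) := (List.range' j (M - j)).map fun i => (i, j)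

/-- The list of the first `m` phases (`j = M-1` down to `j = M-m`). -/
def outerL (M : ℕ) : ℕ → List (ℕ × ℕ)
  | 0 => []
  | m + 1 => outerL M m ++ phaseL M (M - (m + 1))

/-- The outer induction over the phases of `T₁`. -/
lemma outer (p M : ℕ) (s : SState M) (hs1 : Antitone s.1)
    (hs3 : ∀ (i : ℕ) (hi : i + 1 < M),
      s.1 ⟨i, by omega⟩ = s.1 ⟨i + 1, hi⟩ →
        (p : ℤ) ∣ s.1 ⟨i + 1, hi⟩ + s.2 ⟨i + 1, by omega⟩) :
    ∀ m, m ≤ M → APN p M (outerL M m) s ∧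
      (∀ i : Fin M, i.val + m < M → (tRunN p M (outerL M m) s).1 i = s.1 i) ∧
      (∀ i : Fin (M + 1), i.val + m < M → (tRunN p M (outerL M m) s).2 i = s.2 i) := by
  intro m
  induction m with
  | zero =>
    intro _
    refine ⟨?_, fun i _ => rfl, fun i _ => rfl⟩
    intro k
    simp only [outerL, List.take_nil, tRunN_nil]
    exact hs1
  | succ m ih =>
    intro hm
    obtain ⟨ih1, ih2, ih3⟩ := ih (by omega)
    obtain ⟨j, hjdef⟩ : ∃ j, M - (m + 1) = j := ⟨_, rfl⟩
    have hout : outerL M (m + 1) = outerL M m ++ phaseL M j := by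
      rw [outerL, hjdef]
    have hjM : j < M := by omega
    have hphase : APN p M (phaseL M j) (tRunN p M (outerL M m) s) := by
      refine inner p M j hjM (M - j) j (by omega) le_rfl _ ih1.antitone_run ?_
      intro b hba haM heq
      subst hba
      have e1 := ih2 ⟨b, by omega⟩ (show b + m < M by omega)
      have e2 := ih2 ⟨b + 1, haM⟩ (show b + 1 + m < M by omega)
      have e3 := ih3 ⟨b + 1, by omega⟩ (show b + 1 + m < M by omega)
      rw [e1, e2] at heq
      rw [e2, e3]
      exact hs3 b (by omega) heq
    refine ⟨?_, ?_, ?_⟩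
    · rw [hout]
      exact ih1.append hphase
    · intro i hi
      rw [hout, tRunN_append]
      have hfix : (tRunN p M (phaseL M j) (tRunN p M (outerL M m) s)).1 i
          = (tRunN p M (outerL M m) s).1 i := by
        apply tRunN_fst_eq
        intro ij hij
        obtain ⟨x, hx, rfl⟩ := List.mem_map.mp hij
        have hxr := (List.mem_range'_1.mp hx).1
        show x ≠ i.val
        omega
      rw [hfix]
      exact ih2 i (by omega)
    · intro i hi
      rw [hout, tRunN_append]
      have hfix : (tRunN p M (phaseL M j) (tRunN p M (outerL M m) s)).2 i
          = (tRunN p M (outerL M m) s).2 i := by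
        apply tRunN_snd_eq
        intro ij hij
        obtain ⟨x, hx, rfl⟩ := List.mem_map.mp hij
        show j ≠ i.val
        omega
      rw [hfix]
      exact ih3 i (by omega)

lemma filter_range_eq (M a : ℕ) :
    (List.range M).filter (fun n => decide (a ≤ n)) = List.range' a (M - a) := by
  induction M with
  | zero => simp
  | succ n ihn =>
    rw [List.range_succ, List.filter_append, ihn]
    by_cases h : a ≤ n
    · have h1 : n + 1 - a = (n - a) + 1 := by omega
      rw [h1, List.range'_concat]
      congr 1
      have h2 : a + 1 * (n - a) = n := by omega
      rw [h2]
      simp [List.filter_singleton, h]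
    · have h1 : n + 1 - a = 0 := by omega
      have h2 : n - a = 0 := by omega
      rw [h1, h2]
      simp [List.filter_singleton, h]

lemma map_coe_finRange' (n : ℕ) : (List.finRange n).map Fin.val = List.range n := by
  apply List.ext_getElem <;> simp

lemma stepB (M : ℕ) (j : Fin M) :
    ((List.finRange M).filter (fun i => j ≤ i)).map Fin.val
      = List.range' j.val (M - j.val) := by
  have hp : ((fun n => decide (j.val ≤ n)) ∘ Fin.val) = (fun i : Fin M => decide (j ≤ i)) := by
    funext i
    exact decide_eq_decide.mpr Iff.rfl
  rw [← filter_range_eq M j.val, ← map_coe_finRange', List.filter_map, hp]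

lemma order1_rev_map (M : ℕ) :
    ((order1 M).reverse).map (fun ij : Fin M × Fin (M + 1) => (ij.1.val, ij.2.val))
      = ((List.range M).reverse).flatMap (phaseL M) := by
  have key : ∀ j : Fin M,
      ((((List.finRange M).reverse.filter fun i => j ≤ i).map fun i =>
        ((i : Fin M), j.castSucc)).reverse).map
          (fun ij : Fin M × Fin (M + 1) => (ij.1.val, ij.2.val)) = phaseL M j.val := by
    intro j
    rw [← List.map_reverse, List.filter_reverse, List.reverse_reverse, List.map_map,
      phaseL, ← stepB M j, List.map_map]
    rfl
  rw [order1, List.reverse_flatMap, List.map_flatMap]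
  calc (List.finRange M).reverse.flatMap
        (fun j => ((List.reverse ∘ fun j => ((List.finRange M).reverse.filter fun i => j ≤ i).map
          fun i => ((i : Fin M), j.castSucc)) j).map
            (fun ij : Fin M × Fin (M + 1) => (ij.1.val, ij.2.val)))
      = (List.finRange M).reverse.flatMap (fun j => phaseL M j.val) :=
        congrArg (List.flatMap · _) (funext fun j => key j)
    _ = ((List.finRange M).reverse.map Fin.val).flatMap (phaseL M) :=
        (List.flatMap_map _ _ _).symm
    _ = ((List.range M).reverse).flatMap (phaseL M) := by
        rw [List.map_reverse, map_coe_finRange']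

lemma rangeRev_flatMap (M : ℕ) :
    ∀ m, m ≤ M → ((List.range' (M - m) m).reverse).flatMap (phaseL M) = outerL M m := by
  intro m
  induction m with
  | zero => intro _; rfl
  | succ m ih =>
    intro hm
    have h0 : M - (m + 1) + 1 = M - m := by omega
    rw [List.range'_succ, h0, List.reverse_cons, List.flatMap_append, ih (by omega)]
    conv_rhs => rw [outerL]
    simp [List.flatMap_cons]

lemma order1_full (M : ℕ) :
    ((order1 M).reverse).map (fun ij : Fin M × Fin (M + 1) => (ij.1.val, ij.2.val))
      = outerL M M := by
  have h := rangeRev_flatMap M M le_rfl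
  rw [Nat.sub_self, ← List.range_eq_range'] at h
  rw [order1_rev_map, h]

end SerganovaInvAux

/-- At every intermediate stage of the inverse algorithm `T₁` applied
to an element of `𝕄`, the current `λ`-sequence is nonincreasing; in particular the
`λ`-component of `T₁(λ̃,θ̃)` is nonincreasing. -/
theorem serganova_inv1_lambda_antitone (p M : ℕ) (hp : p.Prime) (hM : 1 ≤ M)
    (s : SState M) (hs : s ∈ setM p M) :
    (∀ k : ℕ, Antitone (tRun p M ((order1 M).reverse.take k) s).1) ∧
    Antitone (T1 p M s).1 := by
  classical
  obtain ⟨hs1, hs2, hs3, hs4⟩ := hs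
  have hout := SerganovaInvAux.outer p M s hs1 hs3 M le_rfl
  have hlist := SerganovaInvAux.order1_full M
  constructor
  · intro k
    rw [SerganovaInvAux.tRun_eq_tRunN]
    have hk : ((order1 M).reverse.take k).map
        (fun ij : Fin M × Fin (M + 1) => (ij.1.val, ij.2.val))
        = (SerganovaInvAux.outerL M M).take k := by
      rw [List.map_take, hlist]
    rw [hk]
    exact hout.1 k
  · rw [T1, SerganovaInvAux.tRun_eq_tRunN, hlist]
    exact hout.1.antitone_run
end

section
/- Let p be a prime and M ≥ 1 an integer, and let (λ̃,θ̃) ∈ 𝕄. Then at every intermediate stage of the inverse algorithm T₂ applied to (λ̃,θ̃), the current θ-sequence is nonincreasing; in particular the θ-component of T₂(λ̃,θ̃) satisfies θ_1 ≥ θ_2 ≥ … ≥ θ_{M+1}. -/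
open Function

-- successor relation on pairs
def SRel (M : ℕ) (a b : Fin M × Fin (M + 1)) : Prop :=
  ((b.1 : ℕ) = (a.1 : ℕ) ∧ (b.2 : ℕ) + 1 = (a.2 : ℕ)) ∨
  ((a.2 : ℕ) = 0 ∧ (b.1 : ℕ) = (a.1 : ℕ) + 1 ∧ (b.2 : ℕ) = (b.1 : ℕ))

def Blk {M : ℕ} (i : Fin M) : List (Fin M × Fin (M + 1)) :=
  (((List.finRange M).filter fun j => j ≤ i).map fun j => (i, j.castSucc)).reverse

lemma filter_finRange_eq_take {M : ℕ} (i : Fin M) :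
    ((List.finRange M).filter fun j => j ≤ i) = (List.finRange M).take ((i : ℕ) + 1) := by
  conv_lhs => rw [← List.take_append_drop ((i : ℕ) + 1) (List.finRange M)]
  rw [List.filter_append]
  have h1 : ((List.finRange M).take ((i : ℕ) + 1)).filter (fun j => j ≤ i)
      = (List.finRange M).take ((i : ℕ) + 1) := by
    rw [List.filter_eq_self]
    intro a ha
    rw [List.mem_iff_getElem] at ha
    obtain ⟨n, hn, rfl⟩ := ha
    have hn' : n < (i : ℕ) + 1 := by
      have := hn; simp at this; omega
    rw [List.getElem_take, List.getElem_finRange]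
    simp [Fin.le_def]
    omega
  have h2 : ((List.finRange M).drop ((i : ℕ) + 1)).filter (fun j => j ≤ i) = [] := by
    rw [List.filter_eq_nil_iff]
    intro a ha
    rw [List.mem_iff_getElem] at ha
    obtain ⟨n, hn, rfl⟩ := ha
    rw [List.getElem_drop, List.getElem_finRange]
    simp [Fin.le_def]
    omega
  rw [h1, h2, List.append_nil]

lemma Blk_length {M : ℕ} (i : Fin M) : (Blk i).length = (i : ℕ) + 1 := by
  rw [Blk, filter_finRange_eq_take]
  simp [List.length_take]

lemma Blk_ne_nil {M : ℕ} (i : Fin M) : Blk i ≠ [] := by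
  intro h
  have := Blk_length i
  rw [h] at this
  simp at this

lemma Blk_eq {M : ℕ} (i : Fin M) :
    Blk i = (((List.finRange M).take ((i : ℕ) + 1)).map fun j => (i, j.castSucc)).reverse := by
  rw [Blk, filter_finRange_eq_take]

lemma Blk_getElem {M : ℕ} (i : Fin M) (k : ℕ) (hk : k < (Blk i).length) :
    (Blk i)[k] = (i, (⟨(i : ℕ) - k, by omega⟩ : Fin (M + 1))) := by
  have hk' : k < (i : ℕ) + 1 := by rw [Blk_length] at hk; exact hk
  have hlen : (((List.finRange M).take ((i : ℕ) + 1)).map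
      (fun j => ((i, j.castSucc) : Fin M × Fin (M+1)))).length = (i : ℕ) + 1 := by
    simp [List.length_take]
  have h2 : k < (((List.finRange M).take ((i : ℕ) + 1)).map
      (fun j => ((i, j.castSucc) : Fin M × Fin (M+1)))).reverse.length := by
    rw [List.length_reverse, hlen]; exact hk'
  rw [List.getElem_of_eq (Blk_eq i) hk, List.getElem_reverse, List.getElem_map]
  have hval : ∀ (m : ℕ) (h : m < ((List.finRange M).take ((i:ℕ)+1)).length),
      (((List.finRange M).take ((i:ℕ)+1))[m]).val = m := by
    intro m h
    rw [List.getElem_take, List.getElem_finRange]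
    rfl
  refine Prod.ext rfl (Fin.ext ?_)
  rw [Fin.coe_castSucc, hval]
  simp [List.length_take]

lemma chain'_flatMap' {α β : Type*} {R : β → β → Prop} {S : α → α → Prop} {f : α → List β}
    (hne : ∀ a, f a ≠ []) (hf : ∀ a, (f a).Chain' R)
    (hb : ∀ a b, S a b → ∀ x ∈ (f a).getLast?, ∀ y ∈ (f b).head?, R x y) :
    ∀ l : List α, l.Chain' S → (l.flatMap f).Chain' R := by
  intro l
  induction l with
  | nil => intro _; exact List.isChain_nil
  | cons a rest ih =>
    intro hc
    rw [List.flatMap_cons]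
    refine List.IsChain.append (hf a) (ih (List.IsChain.tail hc)) ?_
    intro x hx y hy
    cases rest with
    | nil => simp at hy
    | cons b rest' =>
      rw [List.flatMap_cons, List.head?_append] at hy
      have hSab : S a b := (List.isChain_cons_cons.mp hc).1
      have hfb : (f b).head?.isSome := by
        cases hh : (f b).head? with
        | none => exact absurd (List.head?_eq_none_iff.mp hh) (hne b)
        | some _ => rfl
      rw [Option.or_of_isSome hfb] at hy
      exact hb a b hSab x hx y hy

lemma Blk_chain {M : ℕ} (i : Fin M) : (Blk i).Chain' (SRel M) := by
  show List.IsChain _ _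
  rw [List.isChain_iff_getElem]
  intro k hk
  have hlen := Blk_length i
  have h1 : k < (Blk i).length := by omega
  have h2 : k + 1 < (Blk i).length := by omega
  rw [Blk_getElem i k h1, Blk_getElem i (k+1) h2]
  left
  constructor
  · rfl
  · simp
    omega

lemma Blk_head? {M : ℕ} (i : Fin M) :
    (Blk i).head? = some (i, (⟨(i : ℕ), by omega⟩ : Fin (M + 1))) := by
  have h0 : 0 < (Blk i).length := by rw [Blk_length]; omega
  rw [List.head?_eq_getElem?, List.getElem?_eq_getElem h0, Blk_getElem i 0 h0]
  simp

lemma Blk_getLast? {M : ℕ} (i : Fin M) :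
    (Blk i).getLast? = some (i, (⟨0, by omega⟩ : Fin (M + 1))) := by
  have h0 : (i : ℕ) < (Blk i).length := by rw [Blk_length]; omega
  rw [List.getLast?_eq_getElem?, Blk_length]
  simp only [Nat.add_sub_cancel]
  rw [List.getElem?_eq_getElem h0, Blk_getElem i (i : ℕ) h0]
  exact congrArg some (Prod.ext rfl (Fin.ext (Nat.sub_self _)))

def revOrder2 (M : ℕ) : List (Fin M × Fin (M + 1)) := (List.finRange M).flatMap Blk

lemma revOrder2_eq (M : ℕ) : (order2 M).reverse = revOrder2 M := by
  rw [order2, List.reverse_flatMap, List.reverse_reverse, revOrder2]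
  rfl

lemma finRange_chain (M : ℕ) :
    (List.finRange M).Chain' (fun a b : Fin M => (b : ℕ) = (a : ℕ) + 1) := by
  show List.IsChain _ _
  rw [List.isChain_iff_getElem]
  intro k hk
  simp only [List.length_finRange] at hk
  rw [List.getElem_finRange, List.getElem_finRange]
  rfl

lemma revOrder2_chain (M : ℕ) : (revOrder2 M).Chain' (SRel M) := by
  refine chain'_flatMap' Blk_ne_nil Blk_chain ?_ _ (finRange_chain M)
  intro a b hS x hx y hy
  rw [Blk_getLast? a] at hx
  rw [Blk_head? b] at hy
  simp only [Option.mem_def, Option.some_inj] at hx hy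
  subst hx; subst hy
  right
  exact ⟨rfl, hS, rfl⟩

lemma revOrder2_mem {M : ℕ} (x : Fin M × Fin (M + 1)) (hx : x ∈ revOrder2 M) :
    (x.2 : ℕ) ≤ (x.1 : ℕ) := by
  rw [revOrder2, List.mem_flatMap] at hx
  obtain ⟨i, _, hxi⟩ := hx
  rw [Blk, List.mem_reverse, List.mem_map] at hxi
  obtain ⟨j, hj, rfl⟩ := hxi
  have := List.of_mem_filter hj
  simp only [decide_eq_true_eq] at this
  exact this

lemma revOrder2_zero {M : ℕ} (hM : 1 ≤ M) :
    ∀ (h : 0 < (revOrder2 M).length),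
    (revOrder2 M)[0] = ((⟨0, by omega⟩ : Fin M), (⟨0, by omega⟩ : Fin (M + 1))) := by
  intro h
  obtain ⟨M', rfl⟩ : ∃ M', M = M' + 1 := ⟨M - 1, by omega⟩
  have heq : revOrder2 (M' + 1)
      = Blk (0 : Fin (M' + 1)) ++ ((List.finRange M').map Fin.succ).flatMap Blk := by
    rw [revOrder2, List.finRange_succ, List.flatMap_cons]
  have h0 : 0 < (Blk (0 : Fin (M' + 1))).length := by rw [Blk_length]; omega
  rw [List.getElem_of_eq heq h, List.getElem_append_left h0, Blk_getElem _ 0 h0]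
  rfl

lemma revOrder2_length_pos {M : ℕ} (hM : 1 ≤ M) : 0 < (revOrder2 M).length := by
  obtain ⟨M', rfl⟩ : ∃ M', M = M' + 1 := ⟨M - 1, by omega⟩
  rw [revOrder2, List.finRange_succ, List.flatMap_cons, List.length_append, Blk_length]
  omega

lemma antitone_update_sub_one {M : ℕ} {f : Fin (M + 1) → ℤ} (hf : Antitone f)
    (j : Fin (M + 1)) (hj : (j : ℕ) + 1 < M + 1)
    (hlt : f ⟨(j : ℕ) + 1, hj⟩ < f j) :
    Antitone (Function.update f j (f j - 1)) := by
  intro a b hab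
  rw [Function.update_apply, Function.update_apply]
  by_cases hb : b = j
  · by_cases ha : a = j
    · simp [ha, hb]
    · subst hb
      simp only [ha, if_false, if_pos rfl]
      have := hf hab
      omega
  · by_cases ha : a = j
    · subst ha
      simp only [hb, if_false, if_pos rfl]
      have hjb : (a : ℕ) < (b : ℕ) := by
        have hv : (a : ℕ) ≤ (b : ℕ) := hab
        have hne : (b : ℕ) ≠ (a : ℕ) := fun h => hb (Fin.ext h)
        omega
      have hb' : f b ≤ f ⟨(a : ℕ) + 1, hj⟩ := hf (by rw [Fin.le_def]; simpa using hjb)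
      omega
    · simp only [ha, hb, if_false]
      exact hf hab

def Inv2 (p : ℕ) {M : ℕ} (s t : SState M) (ij : Fin M × Fin (M + 1)) : Prop :=
  ((ij.2 : ℕ) ≤ (ij.1 : ℕ)) ∧
  (∀ (h : (ij.2 : ℕ) + 1 < M + 1),
    ((p : ℤ) ∣ t.1 ij.1 + t.2 ⟨(ij.2 : ℕ) + 1, h⟩ ∨ t.2 ⟨(ij.2 : ℕ) + 1, h⟩ < t.2 ij.2)) ∧
  (∀ i' : Fin M, (ij.1 : ℕ) < (i' : ℕ) → t.1 i' = s.1 i') ∧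
  (∀ j' : Fin (M + 1), (ij.1 : ℕ) < (j' : ℕ) → t.2 j' = s.2 j')

lemma start_cond {p M : ℕ} {s t : SState M} (hs : s ∈ setM p M)
    (i : Fin M) (j j1 : Fin (M + 1))
    (hj : (j : ℕ) = (i : ℕ)) (hj1 : (j1 : ℕ) = (i : ℕ) + 1)
    (h1 : t.1 i = s.1 i) (h2 : t.2 j = s.2 j) (h3 : t.2 j1 = s.2 j1) :
    (p : ℤ) ∣ t.1 i + t.2 j1 ∨ t.2 j1 < t.2 j := by
  obtain ⟨hth1, hth2, hc1, hc2⟩ := hs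
  have hiM1 : (i : ℕ) < M + 1 := Nat.lt_succ_of_lt i.isLt
  have hiM2 : (i : ℕ) + 1 < M + 1 := Nat.succ_lt_succ i.isLt
  have ej : j = ⟨(i : ℕ), hiM1⟩ := Fin.ext hj
  have ej1 : j1 = ⟨(i : ℕ) + 1, hiM2⟩ := Fin.ext hj1
  rw [h1, h2, h3, ej, ej1]
  by_cases he : s.2 ⟨(i : ℕ), hiM1⟩ = s.2 ⟨(i : ℕ) + 1, hiM2⟩
  · left
    have hd := hc2 (i : ℕ) i.isLt he
    rw [he] at hd
    exact hd
  · right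
    have hle : s.2 ⟨(i : ℕ) + 1, hiM2⟩ ≤ s.2 ⟨(i : ℕ), hiM1⟩ :=
      hth2 (by rw [Fin.le_def]; simp)
    exact lt_of_le_of_ne hle (fun hh => he hh.symm)

theorem main_induction (p M : ℕ) (hM : 1 ≤ M) (s : SState M) (hs : s ∈ setM p M) :
    ∀ k : ℕ, Antitone (tRun p M ((revOrder2 M).take k) s).2 ∧
      (∀ (h : k < (revOrder2 M).length),
        Inv2 p s (tRun p M ((revOrder2 M).take k) s) (revOrder2 M)[k]) := by
  have hs' := hs
  obtain ⟨hsθ1, hsθ2, hsc1, hsc2⟩ := hs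
  intro k
  induction k with
  | zero =>
    have ht : tRun p M ((revOrder2 M).take 0) s = s := by simp [tRun]
    rw [ht]
    refine ⟨hsθ2, ?_⟩
    intro h
    rw [revOrder2_zero hM h]
    refine ⟨le_refl 0, ?_, fun _ _ => rfl, fun _ _ => rfl⟩
    intro hh
    exact start_cond hs' ⟨0, by omega⟩ ⟨0, by omega⟩ ⟨1, hh⟩ rfl rfl rfl rfl rfl
  | succ k ih =>
    by_cases hk : k < (revOrder2 M).length
    case neg =>
      have hT : (revOrder2 M).take (k + 1) = (revOrder2 M).take k := by
        rw [List.take_of_length_le (by omega), List.take_of_length_le (by omega)]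
      rw [hT]
      exact ⟨ih.1, fun h => absurd h (by omega)⟩
    case pos =>
      have hstep : tRun p M ((revOrder2 M).take (k + 1)) s
          = tStep p M (revOrder2 M)[k] (tRun p M ((revOrder2 M).take k) s) := by
        rw [tRun, List.take_succ, List.getElem?_eq_getElem hk, List.foldl_append]
        rfl
      obtain ⟨hAnti, hInv⟩ := ih
      have hI := hInv hk
      obtain ⟨hji, hI2, hI3, hI4⟩ := hI
      set t := tRun p M ((revOrder2 M).take k) s with htdef
      set ij := (revOrder2 M)[k] with hijdef
      have hiM : (ij.1 : ℕ) < M := ij.1.isLt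
      have hj1 : (ij.2 : ℕ) + 1 < M + 1 := by omega
      have hR : ∀ (h1 : k + 1 < (revOrder2 M).length),
          SRel M ij (revOrder2 M)[k + 1] := by
        intro h1
        have := (List.isChain_iff_getElem.mp (revOrder2_chain M)) k (by omega)
        simpa [List.get_eq_getElem] using this
      by_cases hd : (p : ℤ) ∣ t.1 ij.1 + t.2 ij.2
      case pos =>
        have hts : tStep p M ij t = t := by rw [tStep, if_pos hd]
        rw [hstep, hts]
        refine ⟨hAnti, ?_⟩
        intro h1
        rcases hR h1 with ⟨hb1, hb2⟩ | ⟨hz, hb1, hb2⟩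
        · refine ⟨by omega, ?_, ?_, ?_⟩
          · intro hh
            have e2 : (⟨((revOrder2 M)[k+1].2 : ℕ) + 1, hh⟩ : Fin (M + 1)) = ij.2 :=
              Fin.ext hb2
            have e1 : (revOrder2 M)[k+1].1 = ij.1 := Fin.ext hb1
            rw [e1, e2]
            exact Or.inl hd
          · intro i' hi'; exact hI3 i' (by omega)
          · intro j' hj'; exact hI4 j' (by omega)
        · refine ⟨by omega, ?_, ?_, ?_⟩
          · intro hh
            refine start_cond hs' (revOrder2 M)[k+1].1
              (revOrder2 M)[k+1].2 ⟨((revOrder2 M)[k+1].2 : ℕ) + 1, hh⟩ hb2 (by simp; omega)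
              ?_ ?_ ?_
            · exact hI3 _ (by omega)
            · exact hI4 _ (by omega)
            · exact hI4 _ (by simp; omega)
          · intro i' hi'; exact hI3 i' (by omega)
          · intro j' hj'; exact hI4 j' (by omega)
      case neg =>
        have hts : tStep p M ij t
            = (Function.update t.1 ij.1 (t.1 ij.1 + 1),
               Function.update t.2 ij.2 (t.2 ij.2 - 1)) := by
          rw [tStep, if_neg hd]
        have hlt : t.2 ⟨(ij.2 : ℕ) + 1, hj1⟩ < t.2 ij.2 := by
          rcases hI2 hj1 with hdd | hlt
          · have hle : t.2 ⟨(ij.2 : ℕ) + 1, hj1⟩ ≤ t.2 ij.2 :=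
              hAnti (by rw [Fin.le_def]; simp)
            rcases lt_or_eq_of_le hle with h | h
            · exact h
            · exact absurd (h ▸ hdd) hd
          · exact hlt
        rw [hstep, hts]
        have hAnti' : Antitone (Function.update t.2 ij.2 (t.2 ij.2 - 1)) :=
          antitone_update_sub_one hAnti ij.2 hj1 hlt
        refine ⟨hAnti', ?_⟩
        intro h1
        rcases hR h1 with ⟨hb1, hb2⟩ | ⟨hz, hb1, hb2⟩
        · refine ⟨by omega, ?_, ?_, ?_⟩
          · intro hh
            right
            show Function.update t.2 ij.2 (t.2 ij.2 - 1) ⟨((revOrder2 M)[k+1].2 : ℕ) + 1, hh⟩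
              < Function.update t.2 ij.2 (t.2 ij.2 - 1) (revOrder2 M)[k+1].2
            have e2 : (⟨((revOrder2 M)[k+1].2 : ℕ) + 1, hh⟩ : Fin (M + 1)) = ij.2 :=
              Fin.ext hb2
            have hne : (revOrder2 M)[k+1].2 ≠ ij.2 := by
              intro hcon; have := congrArg Fin.val hcon; omega
            rw [e2, Function.update_self, Function.update_of_ne hne]
            have hge : t.2 ij.2 ≤ t.2 (revOrder2 M)[k+1].2 :=
              hAnti (by rw [Fin.le_def]; omega)
            omega
          · intro i' hi'
            show Function.update t.1 ij.1 (t.1 ij.1 + 1) i' = s.1 i'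
            rw [Function.update_of_ne (by intro hcon; have := congrArg Fin.val hcon; omega)]
            exact hI3 i' (by omega)
          · intro j' hj'
            show Function.update t.2 ij.2 (t.2 ij.2 - 1) j' = s.2 j'
            rw [Function.update_of_ne (by intro hcon; have := congrArg Fin.val hcon; omega)]
            exact hI4 j' (by omega)
        · refine ⟨by omega, ?_, ?_, ?_⟩
          · intro hh
            refine start_cond hs' (revOrder2 M)[k+1].1
              (revOrder2 M)[k+1].2 ⟨((revOrder2 M)[k+1].2 : ℕ) + 1, hh⟩ hb2 (by simp; omega)
              ?_ ?_ ?_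
            · show Function.update t.1 ij.1 (t.1 ij.1 + 1) (revOrder2 M)[k+1].1
                = s.1 (revOrder2 M)[k+1].1
              rw [Function.update_of_ne (by intro hcon; have := congrArg Fin.val hcon; omega)]
              exact hI3 _ (by omega)
            · show Function.update t.2 ij.2 (t.2 ij.2 - 1) (revOrder2 M)[k+1].2
                = s.2 (revOrder2 M)[k+1].2
              rw [Function.update_of_ne (by intro hcon; have := congrArg Fin.val hcon; omega)]
              exact hI4 _ (by omega)
            · show Function.update t.2 ij.2 (t.2 ij.2 - 1) ⟨((revOrder2 M)[k+1].2 : ℕ) + 1, hh⟩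
                = s.2 ⟨((revOrder2 M)[k+1].2 : ℕ) + 1, hh⟩
              rw [Function.update_of_ne (by intro hcon; have := congrArg Fin.val hcon; simp at this; omega)]
              exact hI4 _ (by simp; omega)
          · intro i' hi'
            show Function.update t.1 ij.1 (t.1 ij.1 + 1) i' = s.1 i'
            rw [Function.update_of_ne (by intro hcon; have := congrArg Fin.val hcon; omega)]
            exact hI3 i' (by omega)
          · intro j' hj'
            show Function.update t.2 ij.2 (t.2 ij.2 - 1) j' = s.2 j'
            rw [Function.update_of_ne (by intro hcon; have := congrArg Fin.val hcon; omega)]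
            exact hI4 j' (by omega)

/-- At every intermediate stage of the inverse algorithm `T₂` applied
to an element of `𝕄`, the current `θ`-sequence is nonincreasing; in particular the
`θ`-component of `T₂(λ̃,θ̃)` is nonincreasing. -/
theorem serganova_inv2_theta_antitone (p M : ℕ) (hp : p.Prime) (hM : 1 ≤ M)
    (s : SState M) (hs : s ∈ setM p M) :
    (∀ k : ℕ, Antitone (tRun p M ((order2 M).reverse.take k) s).2) ∧
    Antitone (T2 p M s).2 := by
  have key := main_induction p M hM s hs
  constructor
  · intro k
    rw [revOrder2_eq]
    exact (key k).1
  · have hT : T2 p M s = tRun p M ((revOrder2 M).take (revOrder2 M).length) s := by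
      rw [T2, revOrder2_eq, List.take_length]
    rw [hT]
    exact (key (revOrder2 M).length).1
end
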